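/- arXiv:1404.0717 — 11 statements merged into one kernel-verified Lean document; each statement's English description precedes it below -/
import Mathlib

section
/- Let A be a finite abelian group and n ≥ 1. Let d : A →* Equiv.Perm (A × Fin n) be the homomorphism given by diagonal left translation, d a (b, i) = (a * b, i). Then the centralizer in Equiv.Perm (A × Fin n) of the range of d is isomorphic as a group to the wreath product A ≀ Σ_n. -/
/-- The action of `Equiv.Perm (Fin n)` on `Fin n → A` by `(σ • f) i = f (σ⁻¹ i)`. -/
def permMulAut (A : Type*) [Group A] (n : ℕ) : Equiv.Perm (Fin n) →* MulAut (Fin n → A) where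
  toFun σ := MulEquiv.arrowCongr σ (MulEquiv.refl A)
  map_one' := by ext f i; rfl
  map_mul' σ τ := by ext f i; rfl

/-- The wreath product `A ≀ Σ_n = (Fin n → A) ⋊ Equiv.Perm (Fin n)`. -/
abbrev WreathProduct (A : Type*) [Group A] (n : ℕ) : Type _ :=
  SemidirectProduct (Fin n → A) (Equiv.Perm (Fin n)) (permMulAut A n)

section Aux
variable {A : Type*} [CommGroup A] {n : ℕ}

/-- The permutation of `A × Fin n` associated to `(f, σ)`. -/
def wreathPermFun (f : Fin n → A) (σ : Equiv.Perm (Fin n)) : Equiv.Perm (A × Fin n) where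
  toFun p := (p.1 * f (σ p.2), σ p.2)
  invFun p := (p.1 * (f p.2)⁻¹, σ⁻¹ p.2)
  left_inv p := by simp
  right_inv p := by simp

@[simp] lemma wreathPermFun_apply (f : Fin n → A) (σ : Equiv.Perm (Fin n)) (p : A × Fin n) :
    wreathPermFun f σ p = (p.1 * f (σ p.2), σ p.2) := rfl

lemma permMulAut_apply (σ : Equiv.Perm (Fin n)) (f : Fin n → A) (i : Fin n) :
    permMulAut A n σ f i = f (σ⁻¹ i) := rfl

/-- The embedding of the wreath product into `Equiv.Perm (A × Fin n)`. -/
def wreathToPerm : WreathProduct A n →* Equiv.Perm (A × Fin n) where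
  toFun w := wreathPermFun w.left w.right
  map_one' := by
    ext p
    · simp
    · simp
  map_mul' w₁ w₂ := by
    ext p
    · simp [Pi.mul_apply, permMulAut_apply, mul_assoc]
      exact mul_comm _ _
    · simp

end Aux

/-- Let `A` be a finite abelian group and `n ≥ 1`.  If
`d : A →* Equiv.Perm (A × Fin n)` is the homomorphism given by diagonal left
translation, `d a (b, i) = (a * b, i)`, then the centralizer in
`Equiv.Perm (A × Fin n)` of the range of `d` is isomorphic as a group to the
wreath product `A ≀ Σ_n`. -/
theorem centralizer_diagonal_translation_iso_wreath
    {A : Type*} [CommGroup A] [Fintype A] (n : ℕ) (hn : 1 ≤ n)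
    (d : A →* Equiv.Perm (A × Fin n))
    (hd : ∀ (a b : A) (i : Fin n), d a (b, i) = (a * b, i)) :
    Nonempty ((Subgroup.centralizer (Set.range ⇑d)) ≃* WreathProduct A n) := by
  have hmem : ∀ w : WreathProduct A n,
      wreathToPerm w ∈ Subgroup.centralizer (Set.range ⇑d) := by
    intro w
    rw [Subgroup.mem_centralizer_iff]
    rintro x ⟨a, rfl⟩
    ext ⟨b, i⟩
    · simp [wreathToPerm, Equiv.Perm.mul_apply, hd, mul_assoc]
    · simp [wreathToPerm, Equiv.Perm.mul_apply, hd]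
  set Φ : WreathProduct A n →* Subgroup.centralizer (Set.range ⇑d) :=
    wreathToPerm.codRestrict _ hmem with hΦ
  have hinj : Function.Injective Φ := by
    rw [injective_iff_map_eq_one]
    intro w hw
    have hw' : wreathToPerm w = 1 := congrArg Subtype.val hw
    have h1 : ∀ (a : A) (i : Fin n),
        (a * w.left (w.right i), w.right i) = (a, i) := by
      intro a i
      have := congrFun (congrArg (fun (e : Equiv.Perm (A × Fin n)) => ⇑e) hw') (a, i)
      simpa [wreathToPerm] using this
    have hr : w.right = 1 := Equiv.ext fun i => congrArg Prod.snd (h1 1 i)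
    have hl : w.left = 1 := by
      funext i
      have := congrArg Prod.fst (h1 1 i)
      simp at this
      simpa [hr] using this
    exact SemidirectProduct.ext hl hr
  have hsurj : Function.Surjective Φ := by
    rintro ⟨π, hπ⟩
    rw [Subgroup.mem_centralizer_iff] at hπ
    have key : ∀ (a : A) (i : Fin n), π (a, i) = (a * (π (1, i)).1, (π (1, i)).2) := by
      intro a i
      have h := hπ (d a) ⟨a, rfl⟩
      have := congrFun (congrArg (fun (e : Equiv.Perm (A × Fin n)) => ⇑e) h) (1, i)
      simp only [Equiv.Perm.mul_apply] at this
      rw [hd a 1 i, mul_one] at this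
      rw [← this]
      rw [show π (1, i) = ((π (1,i)).1, (π (1,i)).2) from rfl, hd]
    set g : Fin n → A := fun i => (π (1, i)).1 with hg
    set t : Fin n → Fin n := fun i => (π (1, i)).2 with ht
    have tinj : Function.Injective t := by
      intro i j hij
      have e1 : π (g j * (g i)⁻¹, i) = (g j, t i) := by
        rw [key]; simp [g, t, mul_assoc]
      have e2 : π (1, j) = (g j, t j) := by
        rw [key]; simp [g, t]
      have h1 : π (g j * (g i)⁻¹, i) = π (1, j) := by rw [e1, e2, hij]
      have := π.injective h1
      exact congrArg Prod.snd this
    let σ : Equiv.Perm (Fin n) := Equiv.ofBijective t (Finite.injective_iff_bijective.mp tinj)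
    have hσ : ∀ i, σ i = t i := fun i => rfl
    refine ⟨⟨g ∘ σ.symm, σ⟩, ?_⟩
    apply Subtype.ext
    show wreathToPerm _ = π
    ext ⟨a, i⟩
    · simp only [wreathToPerm, MonoidHom.coe_mk, OneHom.coe_mk, wreathPermFun_apply]
      rw [key a i]
      simp [g]
    · simp only [wreathToPerm, MonoidHom.coe_mk, OneHom.coe_mk, wreathPermFun_apply]
      rw [key a i]
      exact congrArg Fin.val (hσ i)
  exact ⟨(MulEquiv.ofBijective Φ ⟨hinj, hsurj⟩).symm⟩
end

section
/- Let G be an abelian group acting transitively on a finite nonempty set X through a homomorphism ρ : G →* Equiv.Perm X. Then for every point x₀ ∈ X, the centralizer of ρ is isomorphic as a group to the quotient group G ⧸ (stabilizer of x₀). -/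
/-- The stabilizer of `x : X` under the action of `G` on `X` through
`ρ : G →* Equiv.Perm X`: the subgroup `{g : G | ρ g x = x}`. -/
def stabOf {G X : Type*} [Group G] (ρ : G →* Equiv.Perm X) (x : X) : Subgroup G :=
  Subgroup.comap ρ (MulAction.stabilizer (Equiv.Perm X) x)

/-- Let `G` be an abelian group acting transitively on a finite nonempty
set `X` through a homomorphism `ρ : G →* Equiv.Perm X`.  Then for every point `x₀ ∈ X`,
the centralizer of `ρ` is isomorphic as a group to the quotient group
`G ⧸ (stabilizer of x₀)`. -/
theorem centralizer_iso_quotient_stabilizer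
    {G X : Type*} [CommGroup G] [Fintype X] [Nonempty X]
    (ρ : G →* Equiv.Perm X) (htrans : ∀ x y : X, ∃ g : G, ρ g x = y) (x₀ : X) :
    Nonempty ((Subgroup.centralizer (Set.range ⇑ρ)) ≃* G ⧸ stabOf ρ x₀) := by
  -- every element of the centralizer fixing x₀ is the identity
  have key : ∀ c : Equiv.Perm X, c ∈ Subgroup.centralizer (Set.range ⇑ρ) →
      c x₀ = x₀ → c = 1 := by
    intro c hc hfix
    ext y
    obtain ⟨g, hg⟩ := htrans x₀ y
    have hcomm := hc (ρ g) ⟨g, rfl⟩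
    calc c y = c (ρ g x₀) := by rw [hg]
      _ = (c * ρ g) x₀ := rfl
      _ = (ρ g * c) x₀ := by rw [← hcomm]
      _ = ρ g x₀ := by simp [Equiv.Perm.mul_apply, hfix]
      _ = y := hg
  have hrange : ∀ g : G, ρ g ∈ Subgroup.centralizer (Set.range ⇑ρ) := by
    intro g σ hσ
    obtain ⟨h, rfl⟩ := hσ
    rw [← map_mul, ← map_mul, mul_comm]
  -- stabilizer = kernel
  have hstab : stabOf ρ x₀ = ρ.ker := by
    ext g
    constructor
    · intro hg
      exact key (ρ g) (hrange g) hg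
    · intro hg
      show ρ g x₀ = x₀
      rw [show ρ g = 1 from hg]; rfl
  -- centralizer = range
  have hcent : Subgroup.centralizer (Set.range ⇑ρ) = ρ.range := by
    apply le_antisymm
    · intro c hc
      obtain ⟨g, hg⟩ := htrans x₀ (c x₀)
      refine ⟨g, ?_⟩
      have h1 : (ρ g)⁻¹ * c = 1 := by
        apply key _ (mul_mem (inv_mem (hrange g)) hc)
        show (ρ g)⁻¹ (c x₀) = x₀
        rw [← hg]
        exact (ρ g).symm_apply_apply x₀
      exact (inv_mul_eq_one.mp h1)
    · rintro _ ⟨g, rfl⟩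
      exact hrange g
  exact ⟨((MulEquiv.subgroupCongr hcent).trans
    (QuotientGroup.quotientKerEquivRange ρ).symm).trans
    (QuotientGroup.quotientMulEquivOfEq hstab.symm)⟩
end

section
/- Let G be an abelian group acting on a finite set X through a homomorphism ρ : G →* Equiv.Perm X. Since G is abelian, all points of a given G-orbit have the same stabilizer subgroup, and each stabilizer has finite index in G. Let T be the (finite) set of subgroups of G that occur as stabilizers of points of X, and for H ∈ T let N_H be the number of G-orbits whose points have stabilizer exactly H. Then the centralizer of ρ in Equiv.Perm X is isomorphic as a group to the product over H ∈ T of the wreath products (G ⧸ H) ≀ Σ_{N_H}. -/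
/-- The orbit equivalence relation on `X` for the action of `G` via `ρ`. -/
def orbitSetoid {G X : Type*} [Group G] (ρ : G →* Equiv.Perm X) : Setoid X where
  r x y := ∃ g : G, ρ g x = y
  iseqv := by
    constructor
    · intro x; exact ⟨1, by simp⟩
    · rintro x y ⟨g, rfl⟩; exact ⟨g⁻¹, by simp⟩
    · rintro x y z ⟨g, rfl⟩ ⟨h, rfl⟩; exact ⟨h * g, by simp⟩

/-- The number of `G`-orbits in `X` all of whose points have stabilizer exactly `H`. -/
noncomputable def orbitCountWithStab {G X : Type*} [Group G]
    (ρ : G →* Equiv.Perm X) (H : Subgroup G) : ℕ :=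
  Nat.card (Quotient (Setoid.comap (Subtype.val : {x : X // stabOf ρ x = H} → X)
    (orbitSetoid ρ)))

namespace CW

set_option linter.unusedSectionVars false

variable {G X : Type*} [CommGroup G] [Fintype X] (ρ : G →* Equiv.Perm X)

lemma apply_mul (g h : G) (x : X) : ρ (g * h) x = ρ g (ρ h x) := by
  rw [map_mul]; rfl

lemma mem_stabOf {x : X} {h : G} : h ∈ stabOf ρ x ↔ ρ h x = x := Iff.rfl

lemma stabOf_apply (g : G) (x : X) : stabOf ρ (ρ g x) = stabOf ρ x := by
  ext h
  rw [mem_stabOf, mem_stabOf]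
  constructor
  · intro hh
    apply (ρ g).injective
    calc ρ g (ρ h x) = ρ (g * h) x := by rw [map_mul]; rfl
    _ = ρ (h * g) x := by rw [mul_comm]
    _ = ρ h (ρ g x) := by rw [map_mul]; rfl
    _ = ρ g x := hh
  · intro hh
    calc ρ h (ρ g x) = ρ (h * g) x := by rw [map_mul]; rfl
    _ = ρ (g * h) x := by rw [mul_comm]
    _ = ρ g (ρ h x) := by rw [map_mul]; rfl
    _ = ρ g x := by rw [hh]

/-! ### The model space -/

abbrev XH (H : Subgroup G) := {x : X // stabOf ρ x = H}

abbrev QH (H : Subgroup G) :=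
  Quotient (Setoid.comap (Subtype.val : XH ρ H → X) (orbitSetoid ρ))

noncomputable def eFin (H : Subgroup G) : Fin (orbitCountWithStab ρ H) ≃ QH ρ H :=
  (Finite.equivFin _).symm

/-- basepoint of an orbit -/
noncomputable def bp (H : Subgroup G) (q : QH ρ H) : X := (Quotient.out q).val

lemma stab_bp (H : Subgroup G) (q : QH ρ H) : stabOf ρ (bp ρ H q) = H :=
  (Quotient.out q).2

lemma bp_rel (H : Subgroup G) (q : QH ρ H) :
    (Quotient.mk _ (⟨bp ρ H q, stab_bp ρ H q⟩ : XH ρ H) : QH ρ H) = q := by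
  have : (⟨bp ρ H q, stab_bp ρ H q⟩ : XH ρ H) = Quotient.out q := Subtype.ext rfl
  rw [this, Quotient.out_eq]

/-- the map `G ⧸ H → X` sending `g` to `ρ g x₀`. -/
def phi (H : Subgroup G) (x₀ : X) (hx : H ≤ stabOf ρ x₀) : G ⧸ H → X :=
  fun a => Quotient.liftOn' a (fun g => ρ g x₀) (by
    intro g₁ g₂ hg
    have h1 : g₁⁻¹ * g₂ ∈ H := QuotientGroup.leftRel_apply.mp hg
    have h2 : ρ (g₁⁻¹ * g₂) x₀ = x₀ := hx h1
    show ρ g₁ x₀ = ρ g₂ x₀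
    calc ρ g₁ x₀ = ρ g₁ (ρ (g₁⁻¹ * g₂) x₀) := by rw [h2]
    _ = ρ (g₁ * (g₁⁻¹ * g₂)) x₀ := (apply_mul ρ _ _ _).symm
    _ = ρ g₂ x₀ := by group)

lemma phi_mk (H : Subgroup G) (x₀ : X) (hx : H ≤ stabOf ρ x₀) (g : G) :
    phi ρ H x₀ hx (g : G ⧸ H) = ρ g x₀ := rfl

lemma phi_smul (H : Subgroup G) (x₀ : X) (hx : H ≤ stabOf ρ x₀) (g : G) (a : G ⧸ H) :
    phi ρ H x₀ hx ((g : G ⧸ H) * a) = ρ g (phi ρ H x₀ hx a) := by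
  induction a using QuotientGroup.induction_on with
  | H b =>
    rw [← QuotientGroup.mk_mul, phi_mk, phi_mk, map_mul]
    rfl

lemma phi_inj (H : Subgroup G) (x₀ : X) (hx : stabOf ρ x₀ = H) :
    Function.Injective (phi ρ H x₀ hx.ge) := by
  intro a b hab
  induction a using QuotientGroup.induction_on with
  | H g₁ =>
  induction b using QuotientGroup.induction_on with
  | H g₂ =>
  rw [phi_mk, phi_mk] at hab
  rw [QuotientGroup.eq]
  rw [← hx, mem_stabOf, map_mul]
  show ρ g₁⁻¹ (ρ g₂ x₀) = x₀
  rw [← hab, ← Equiv.Perm.mul_apply, ← map_mul, inv_mul_cancel, map_one]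
  rfl

/-- The model type. -/
abbrev YT := Σ H : Set.range (fun x : X => stabOf ρ x),
  Fin (orbitCountWithStab ρ H.val) × (G ⧸ (H.val : Subgroup G))

/-- The standard `G`-action on the model type. -/
def rho0Fun (g : G) : YT ρ → YT ρ := fun y => ⟨y.1, y.2.1, (g : G ⧸ y.1.val) * y.2.2⟩

lemma rho0Fun_comp (g h : G) (y : YT ρ) :
    rho0Fun ρ g (rho0Fun ρ h y) = rho0Fun ρ (g * h) y := by
  obtain ⟨H, i, a⟩ := y
  simp [rho0Fun, mul_assoc]
  rfl

def rho0 : G →* Equiv.Perm (YT ρ) where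
  toFun g := ⟨rho0Fun ρ g, rho0Fun ρ g⁻¹,
    fun y => by rw [rho0Fun_comp, inv_mul_cancel]; obtain ⟨H, i, a⟩ := y; simp [rho0Fun],
    fun y => by rw [rho0Fun_comp, mul_inv_cancel]; obtain ⟨H, i, a⟩ := y; simp [rho0Fun]⟩
  map_one' := by
    apply Equiv.ext; intro y
    show rho0Fun ρ 1 y = y
    obtain ⟨H, i, a⟩ := y; simp [rho0Fun]
  map_mul' g h := by
    apply Equiv.ext; intro y
    show rho0Fun ρ (g * h) y = rho0Fun ρ g (rho0Fun ρ h y)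
    rw [rho0Fun_comp]

lemma rho0_apply (g : G) (y : YT ρ) : rho0 ρ g y = ⟨y.1, y.2.1, (g : G ⧸ y.1.val) * y.2.2⟩ := rfl

/-! ### The equivariant bijection `ψ : YT → X` -/

noncomputable def psi : YT ρ → X := fun y =>
  phi ρ y.1.val (bp ρ y.1.val (eFin ρ y.1.val y.2.1)) (stab_bp ρ _ _).ge y.2.2

lemma stab_psi (y : YT ρ) : stabOf ρ (psi ρ y) = y.1.val := by
  obtain ⟨H, i, a⟩ := y
  obtain ⟨g, hg⟩ := QuotientGroup.mk_surjective a
  show stabOf ρ (phi ρ H.val _ _ a) = H.val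
  rw [← hg, phi_mk, stabOf_apply, stab_bp]

lemma psi_rel (y : YT ρ) : ∃ g : G, ρ g (bp ρ y.1.val (eFin ρ y.1.val y.2.1)) = psi ρ y := by
  obtain ⟨H, i, a⟩ := y
  obtain ⟨g, hg⟩ := QuotientGroup.mk_surjective a
  exact ⟨g, by show ρ g _ = phi ρ H.val _ _ a; rw [← hg, phi_mk]⟩

lemma psi_apply (H : Set.range (fun x : X => stabOf ρ x))
    (i : Fin (orbitCountWithStab ρ H.val)) (a : G ⧸ (H.val : Subgroup G)) :
    psi ρ ⟨H, i, a⟩ = phi ρ H.val (bp ρ H.val (eFin ρ H.val i)) (stab_bp ρ _ _).ge a := rfl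

lemma psi_equivariant (g : G) (y : YT ρ) : psi ρ (rho0 ρ g y) = ρ g (psi ρ y) := by
  obtain ⟨H, i, a⟩ := y
  have h1 : rho0 ρ g ⟨H, i, a⟩ = ⟨H, i, (g : G ⧸ (H.val : Subgroup G)) * a⟩ := rfl
  rw [h1, psi_apply, psi_apply, phi_smul]

lemma psi_bijective : Function.Bijective (psi ρ) := by
  constructor
  · rintro ⟨H, i, a⟩ ⟨H', i', a'⟩ hy
    have hH : H = H' := by
      have := stab_psi ρ ⟨H, i, a⟩
      rw [hy, stab_psi] at this
      exact (Subtype.ext this).symm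
    subst hH
    have hi : i = i' := by
      apply (eFin ρ H.val).injective
      obtain ⟨g, hg⟩ := psi_rel ρ ⟨H, i, a⟩
      obtain ⟨g', hg'⟩ := psi_rel ρ ⟨H, i', a'⟩
      rw [← bp_rel ρ H.val (eFin ρ H.val i), ← bp_rel ρ H.val (eFin ρ H.val i')]
      apply Quotient.sound
      show ∃ h : G, ρ h _ = _
      exact ⟨g'⁻¹ * g, by
        show ρ (g'⁻¹ * g) (bp ρ H.val (eFin ρ H.val i)) = bp ρ H.val (eFin ρ H.val i')
        rw [map_mul]
        show ρ g'⁻¹ (ρ g _) = _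
        rw [hg, hy, ← hg', ← Equiv.Perm.mul_apply, ← map_mul, inv_mul_cancel, map_one]
        rfl⟩
    subst hi
    have ha : a = a' := by
      apply phi_inj ρ H.val (bp ρ H.val (eFin ρ H.val i)) (stab_bp ρ _ _)
      exact hy
    rw [ha]
  · intro x
    set H₀ : Subgroup G := stabOf ρ x with hH₀
    have hmem : H₀ ∈ Set.range (fun x : X => stabOf ρ x) := ⟨x, rfl⟩
    set H : Set.range (fun x : X => stabOf ρ x) := ⟨H₀, hmem⟩ with hH
    set q : QH ρ H₀ := Quotient.mk _ (⟨x, rfl⟩ : XH ρ H₀) with hq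
    set i : Fin (orbitCountWithStab ρ H₀) := (eFin ρ H₀).symm q with hi
    have hqi : eFin ρ H₀ i = q := (eFin ρ H₀).apply_symm_apply q
    have hrel : (Quotient.mk _ (⟨bp ρ H₀ q, stab_bp ρ H₀ q⟩ : XH ρ H₀) : QH ρ H₀) = q :=
      bp_rel ρ H₀ q
    rw [hq] at hrel
    obtain ⟨g, hg⟩ : ∃ g : G, ρ g (bp ρ H₀ q) = x := Quotient.exact hrel
    refine ⟨⟨H, i, (g : G ⧸ H₀)⟩, ?_⟩
    show phi ρ H₀ (bp ρ H₀ (eFin ρ H₀ i)) _ (g : G ⧸ H₀) = x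
    rw [phi_mk, hqi]
    exact hg

noncomputable def eYX : YT ρ ≃ X := Equiv.ofBijective (psi ρ) (psi_bijective ρ)

/-! ### conjugation mul equiv -/

def permCongrMulEquiv {α β : Type*} (e : α ≃ β) : Equiv.Perm α ≃* Equiv.Perm β :=
  { Equiv.permCongr e with
    map_mul' := by intro σ τ; ext x; simp [Equiv.permCongr_apply] }

lemma permCongrMulEquiv_apply {α β : Type*} (e : α ≃ β) (σ : Equiv.Perm α) (b : β) :
    permCongrMulEquiv e σ b = e (σ (e.symm b)) := rfl

def centralizerCongr {M N : Type*} [Group M] [Group N] (φ : M ≃* N) (S : Set M)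
    (S' : Set N) (hS : ∀ m, m ∈ S ↔ φ m ∈ S') (hS' : ∀ n ∈ S', φ.symm n ∈ S) :
    Subgroup.centralizer S ≃* Subgroup.centralizer S' where
  toFun c := ⟨φ c, by
    rw [Subgroup.mem_centralizer_iff]
    intro n hn
    have h1 : φ.symm n ∈ S := hS' n hn
    have h2 := (Subgroup.mem_centralizer_iff.mp c.2) _ h1
    have := congrArg φ h2
    rw [map_mul, map_mul, φ.apply_symm_apply] at this
    exact this⟩
  invFun d := ⟨φ.symm d, by
    rw [Subgroup.mem_centralizer_iff]
    intro m hm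
    have h2 := (Subgroup.mem_centralizer_iff.mp d.2) _ ((hS m).mp hm)
    have := congrArg φ.symm h2
    rw [map_mul, map_mul, φ.symm_apply_apply] at this
    exact this⟩
  left_inv c := by ext; simp
  right_inv d := by ext; simp
  map_mul' c d := by ext; simp

/-! ### The wreath product action on the model -/

abbrev WW := ∀ H : Set.range (fun x : X => stabOf ρ x),
  WreathProduct (G ⧸ (H.val : Subgroup G)) (orbitCountWithStab ρ (H.val : Subgroup G))

def act (w : WW ρ) : YT ρ → YT ρ := fun y =>
  ⟨y.1, (w y.1).right y.2.1, (w y.1).left ((w y.1).right y.2.1) * y.2.2⟩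

lemma act_mul (w w' : WW ρ) (y : YT ρ) : act ρ (w * w') y = act ρ w (act ρ w' y) := by
  obtain ⟨H, i, a⟩ := y
  simp only [act, Pi.mul_apply, SemidirectProduct.mul_right, SemidirectProduct.mul_left]
  refine congrArg (Sigma.mk H) (Prod.ext rfl ?_)
  show ((w H).left * (permMulAut _ _ (w H).right) (w' H).left) _ * a = _
  simp only [Pi.mul_apply, Equiv.Perm.mul_apply]
  show ((w H).left ((w H).right ((w' H).right i)) *
      (w' H).left ((w H).right⁻¹ ((w H).right ((w' H).right i)))) * a = _
  rw [Equiv.Perm.inv_def, Equiv.symm_apply_apply, mul_assoc]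
  rfl

lemma act_one (y : YT ρ) : act ρ 1 y = y := by
  obtain ⟨H, i, a⟩ := y
  simp [act]

noncomputable def Phi : WW ρ →* Equiv.Perm (YT ρ) where
  toFun w := ⟨act ρ w, act ρ w⁻¹,
    fun y => by rw [← act_mul, inv_mul_cancel, act_one],
    fun y => by rw [← act_mul, mul_inv_cancel, act_one]⟩
  map_one' := by apply Equiv.ext; intro y; exact act_one ρ y
  map_mul' w w' := by apply Equiv.ext; intro y; exact act_mul ρ w w' y

lemma Phi_apply (w : WW ρ) (y : YT ρ) : Phi ρ w y = act ρ w y := rfl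

lemma Phi_mem_centralizer (w : WW ρ) :
    Phi ρ w ∈ Subgroup.centralizer (Set.range ⇑(rho0 ρ)) := by
  rw [Subgroup.mem_centralizer_iff]
  rintro s ⟨g, rfl⟩
  apply Equiv.ext; intro y
  obtain ⟨H, i, a⟩ := y
  show rho0 ρ g (Phi ρ w ⟨H, i, a⟩) = Phi ρ w (rho0 ρ g ⟨H, i, a⟩)
  rw [Phi_apply, Phi_apply, rho0_apply]
  show rho0 ρ g ⟨H, _, _⟩ = act ρ w ⟨H, i, (g : G ⧸ H.val) * a⟩
  rw [rho0_apply]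
  exact congrArg (Sigma.mk H) (Prod.ext rfl (mul_left_comm _ _ _))

/-- main step: the hom into the centralizer is bijective. -/
noncomputable def Phi' : WW ρ →* Subgroup.centralizer (Set.range ⇑(rho0 ρ)) :=
  (Phi ρ).codRestrict _ (Phi_mem_centralizer ρ)

lemma sigma_snd_eq {H : Set.range (fun x : X => stabOf ρ x)}
    {p q : Fin (orbitCountWithStab ρ H.val) × (G ⧸ (H.val : Subgroup G))}
    (h : (⟨H, p⟩ : YT ρ) = ⟨H, q⟩) : p = q := by
  have := Sigma.mk.inj_iff.mp h
  exact eq_of_heq this.2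

lemma Phi'_injective : Function.Injective (Phi' ρ) := by
  rw [← MonoidHom.ker_eq_bot_iff, Subgroup.eq_bot_iff_forall]
  intro w hw
  rw [MonoidHom.mem_ker] at hw
  have hw' : ∀ y : YT ρ, act ρ w y = y := by
    intro y
    have := congrArg Subtype.val hw
    have h2 := congrFun (congrArg (fun (s : Equiv.Perm (YT ρ)) => (s : YT ρ → YT ρ)) this) y
    exact h2
  funext H
  have key : ∀ i, act ρ w ⟨H, i, 1⟩ = ⟨H, i, 1⟩ := fun i => hw' _
  have hσ : ∀ i, (w H).right i = i := by
    intro i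
    have := sigma_snd_eq ρ (key i)
    exact congrArg Prod.fst this
  have hf : ∀ i, (w H).left i = 1 := by
    intro i
    have := sigma_snd_eq ρ (key i)
    have h2 := congrArg Prod.snd this
    simp only [act] at h2 ⊢
    rw [hσ i] at h2
    simpa using h2
  have hleft : (w H).left = (1 : WreathProduct (G ⧸ (H.val : Subgroup G)) (orbitCountWithStab ρ H.val)).left := by
    funext i
    simpa using hf i
  have hright : (w H).right = (1 : WreathProduct (G ⧸ (H.val : Subgroup G)) (orbitCountWithStab ρ H.val)).right := by
    apply Equiv.ext; intro i
    simpa using hσ i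
  exact SemidirectProduct.ext hleft hright

section Surj

variable (c : Equiv.Perm (YT ρ)) (hc : ∀ (g : G) (y : YT ρ), c (rho0 ρ g y) = rho0 ρ g (c y))

lemma stabY_eq (y : YT ρ) {g : G} : rho0 ρ g y = y ↔ g ∈ (y.1.val : Subgroup G) := by
  obtain ⟨H, i, a⟩ := y
  rw [rho0_apply]
  constructor
  · intro h
    have := sigma_snd_eq ρ h
    have h2 := congrArg Prod.snd this
    simp only at h2
    rw [← QuotientGroup.eq_one_iff]
    exact mul_eq_right.mp h2
  · intro h
    have : (g : G ⧸ (H.val : Subgroup G)) = 1 := (QuotientGroup.eq_one_iff g).mpr h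
    rw [this, one_mul]

include hc in
lemma fst_c_eq (y : YT ρ) : (c y).1 = y.1 := by
  have key : ∀ (d : Equiv.Perm (YT ρ)),
      (∀ (g : G) (z : YT ρ), d (rho0 ρ g z) = rho0 ρ g (d z)) →
      ∀ z : YT ρ, (z.1.val : Subgroup G) ≤ ((d z).1.val : Subgroup G) := by
    intro d hd z g hg
    have h1 : rho0 ρ g z = z := (stabY_eq ρ z).mpr hg
    have h2 : rho0 ρ g (d z) = d z := by rw [← hd, h1]
    exact (stabY_eq ρ (d z)).mp h2
  have hinv : ∀ (g : G) (z : YT ρ), c⁻¹ (rho0 ρ g z) = rho0 ρ g (c⁻¹ z) := by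
    intro g z
    apply c.injective
    rw [hc, Equiv.Perm.inv_def, Equiv.apply_symm_apply, Equiv.apply_symm_apply]
  have le1 := key c hc y
  have le2 := key c⁻¹ hinv (c y)
  rw [Equiv.Perm.inv_def, Equiv.symm_apply_apply] at le2
  exact Subtype.ext (le_antisymm le2 le1)

lemma sigma_exists (s : YT ρ) (H : Set.range (fun x : X => stabOf ρ x)) (h : s.1 = H) :
    ∃ p, s = ⟨H, p⟩ := by
  cases s
  subst h
  exact ⟨_, rfl⟩

include hc

noncomputable def gmap (H : Set.range (fun x : X => stabOf ρ x))
    (p : Fin (orbitCountWithStab ρ H.val) × (G ⧸ (H.val : Subgroup G))) :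
    Fin (orbitCountWithStab ρ H.val) × (G ⧸ (H.val : Subgroup G)) :=
  (sigma_exists ρ _ H (fst_c_eq ρ c hc ⟨H, p⟩)).choose

lemma gmap_spec (H : Set.range (fun x : X => stabOf ρ x))
    (p : Fin (orbitCountWithStab ρ H.val) × (G ⧸ (H.val : Subgroup G))) :
    c ⟨H, p⟩ = ⟨H, gmap ρ c hc H p⟩ :=
  (sigma_exists ρ _ H (fst_c_eq ρ c hc ⟨H, p⟩)).choose_spec

variable (H : Set.range (fun x : X => stabOf ρ x))

lemma gmap_equivariant (g : G) (i : Fin (orbitCountWithStab ρ H.val))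
    (a : G ⧸ (H.val : Subgroup G)) :
    gmap ρ c hc H (i, (g : G ⧸ (H.val : Subgroup G)) * a) =
      ((gmap ρ c hc H (i, a)).1, (g : G ⧸ (H.val : Subgroup G)) * (gmap ρ c hc H (i, a)).2) := by
  apply sigma_snd_eq ρ (H := H)
  calc (⟨H, gmap ρ c hc H (i, (g : G ⧸ (H.val : Subgroup G)) * a)⟩ : YT ρ)
      = c ⟨H, (i, (g : G ⧸ (H.val : Subgroup G)) * a)⟩ := (gmap_spec ρ c hc H _).symm
    _ = c (rho0 ρ g ⟨H, (i, a)⟩) := rfl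
    _ = rho0 ρ g (c ⟨H, (i, a)⟩) := hc g _
    _ = rho0 ρ g ⟨H, gmap ρ c hc H (i, a)⟩ := by rw [gmap_spec ρ c hc H (i, a)]
    _ = ⟨H, ((gmap ρ c hc H (i, a)).1,
          (g : G ⧸ (H.val : Subgroup G)) * (gmap ρ c hc H (i, a)).2)⟩ := rfl

lemma gmap_injective : Function.Injective (gmap ρ c hc H) := by
  intro p p' h
  have : c ⟨H, p⟩ = c ⟨H, p'⟩ := by rw [gmap_spec ρ c hc H p, gmap_spec ρ c hc H p', h]
  exact sigma_snd_eq ρ (c.injective this)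

lemma gmap_surjective : Function.Surjective (gmap ρ c hc H) := by
  intro r
  obtain ⟨y, hy⟩ := c.surjective ⟨H, r⟩
  have h1 : y.1 = H := by rw [← fst_c_eq ρ c hc y, hy]
  obtain ⟨p, hp⟩ := sigma_exists ρ y H h1
  refine ⟨p, ?_⟩
  apply sigma_snd_eq ρ (H := H)
  rw [← gmap_spec ρ c hc H p, ← hp, hy]

noncomputable def sigmaFun : Fin (orbitCountWithStab ρ H.val) → Fin (orbitCountWithStab ρ H.val) :=
  fun i => (gmap ρ c hc H (i, 1)).1

lemma gmap_eq (i : Fin (orbitCountWithStab ρ H.val)) (a : G ⧸ (H.val : Subgroup G)) :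
    gmap ρ c hc H (i, a) = (sigmaFun ρ c hc H i, (gmap ρ c hc H (i, 1)).2 * a) := by
  obtain ⟨g, hg⟩ := QuotientGroup.mk_surjective a
  have h1 : (i, a) = (i, (g : G ⧸ (H.val : Subgroup G)) * 1) := by rw [mul_one, hg]
  rw [h1, gmap_equivariant ρ c hc H g i 1]
  refine Prod.ext rfl ?_
  show (g : G ⧸ (H.val : Subgroup G)) * _ = _ * a
  rw [← hg, mul_comm]

lemma sigmaFun_bijective : Function.Bijective (sigmaFun ρ c hc H) := by
  constructor
  · intro i i' h
    set b := (gmap ρ c hc H (i, 1)).2 with hb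
    set b' := (gmap ρ c hc H (i', 1)).2 with hb'
    have h1 : gmap ρ c hc H (i', b'⁻¹ * b) = gmap ρ c hc H (i, 1) := by
      rw [gmap_eq ρ c hc H i' (b'⁻¹ * b), gmap_eq ρ c hc H i 1, ← h, mul_one]
      refine Prod.ext rfl ?_
      rw [← hb, ← hb', mul_inv_cancel_left]
    have := gmap_injective ρ c hc H h1
    exact (congrArg Prod.fst this).symm
  · intro j
    obtain ⟨p, hp⟩ := gmap_surjective ρ c hc H (j, 1)
    obtain ⟨i, a⟩ := p
    rw [gmap_eq ρ c hc H i a] at hp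
    exact ⟨i, congrArg Prod.fst hp⟩

noncomputable def sigmaPerm : Equiv.Perm (Fin (orbitCountWithStab ρ H.val)) :=
  Equiv.ofBijective _ (sigmaFun_bijective ρ c hc H)

noncomputable def wOf : WW ρ := fun H =>
  ⟨fun j => (gmap ρ c hc H ((sigmaPerm ρ c hc H).symm j, 1)).2, sigmaPerm ρ c hc H⟩

lemma Phi_wOf : Phi ρ (wOf ρ c hc) = c := by
  apply Equiv.ext
  intro y
  obtain ⟨H, i, a⟩ := y
  rw [Phi_apply]
  have h1 : act ρ (wOf ρ c hc) ⟨H, (i, a)⟩ =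
      ⟨H, (sigmaPerm ρ c hc H i,
        (gmap ρ c hc H ((sigmaPerm ρ c hc H).symm (sigmaPerm ρ c hc H i), 1)).2 * a)⟩ := rfl
  rw [h1, Equiv.symm_apply_apply, gmap_spec ρ c hc H (i, a), gmap_eq ρ c hc H i a]
  rfl

end Surj

lemma Phi'_surjective : Function.Surjective (Phi' ρ) := by
  rintro ⟨c, hcmem⟩
  have hc : ∀ (g : G) (y : YT ρ), c (rho0 ρ g y) = rho0 ρ g (c y) := by
    intro g y
    have h := (Subgroup.mem_centralizer_iff.mp hcmem) (rho0 ρ g) ⟨g, rfl⟩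
    have := congrFun (congrArg (fun (s : Equiv.Perm (YT ρ)) => (s : YT ρ → YT ρ)) h) y
    exact this.symm
  exact ⟨wOf ρ c hc, Subtype.ext (Phi_wOf ρ c hc)⟩

lemma permCongr_rho0 (g : G) : permCongrMulEquiv (eYX ρ) (rho0 ρ g) = ρ g := by
  apply Equiv.ext
  intro x
  rw [permCongrMulEquiv_apply]
  show psi ρ (rho0 ρ g ((eYX ρ).symm x)) = ρ g x
  rw [psi_equivariant]
  congr 1
  exact (eYX ρ).apply_symm_apply x

end CW

/-- Let `G` be an abelian group acting on a finite set `X` through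
`ρ : G →* Equiv.Perm X`.  All points of a given `G`-orbit have the same stabilizer, each
stabilizer has finite index, and the centralizer of `ρ` in `Equiv.Perm X` is isomorphic
as a group to the product over the set `T` of occurring stabilizers `H` of the wreath
products `(G ⧸ H) ≀ Σ_{N_H}`, where `N_H` is the number of orbits with stabilizer `H`. -/
theorem centralizer_iso_prod_wreath
    {G X : Type*} [CommGroup G] [Fintype X] (ρ : G →* Equiv.Perm X) :
    (∀ x y : X, (∃ g : G, ρ g x = y) → stabOf ρ x = stabOf ρ y) ∧
      (∀ x : X, (stabOf ρ x).index ≠ 0) ∧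
      Nonempty ((Subgroup.centralizer (Set.range ⇑ρ)) ≃*
        ∀ H : Set.range (fun x : X => stabOf ρ x),
          WreathProduct (G ⧸ (H : Subgroup G)) (orbitCountWithStab ρ (H : Subgroup G))) := by
  refine ⟨?_, ?_, ?_⟩
  · rintro x y ⟨g, rfl⟩
    exact (CW.stabOf_apply ρ g x).symm
  · intro x
    haveI : Finite (G ⧸ stabOf ρ x) :=
      Finite.of_injective _ (CW.phi_inj ρ (stabOf ρ x) x rfl)
    exact Subgroup.index_ne_zero_of_finite
  · have key : ∀ g : G, CW.permCongrMulEquiv (CW.eYX ρ) (CW.rho0 ρ g) = ρ g :=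
      CW.permCongr_rho0 ρ
    have h1 : ∀ m, m ∈ Set.range ⇑(CW.rho0 ρ) ↔
        CW.permCongrMulEquiv (CW.eYX ρ) m ∈ Set.range ⇑ρ := by
      intro m
      constructor
      · rintro ⟨g, rfl⟩; exact ⟨g, (key g).symm⟩
      · rintro ⟨g, hg⟩
        refine ⟨g, ?_⟩
        apply (CW.permCongrMulEquiv (CW.eYX ρ)).injective
        rw [key g, hg]
    have h2 : ∀ n ∈ Set.range ⇑ρ, (CW.permCongrMulEquiv (CW.eYX ρ)).symm n ∈
        Set.range ⇑(CW.rho0 ρ) := by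
      rintro n ⟨g, rfl⟩
      exact ⟨g, by rw [← key g, MulEquiv.symm_apply_apply]⟩
    have Φiso : CW.WW ρ ≃* Subgroup.centralizer (Set.range ⇑(CW.rho0 ρ)) :=
      MulEquiv.ofBijective (CW.Phi' ρ) ⟨CW.Phi'_injective ρ, CW.Phi'_surjective ρ⟩
    have step : Subgroup.centralizer (Set.range ⇑(CW.rho0 ρ)) ≃*
        Subgroup.centralizer (Set.range ⇑ρ) :=
      CW.centralizerCongr (CW.permCongrMulEquiv (CW.eYX ρ)) _ _ h1 h2
    exact ⟨step.symm.trans Φiso.symm⟩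
end

section
/- Let p be a prime, X a finite set, and S a finite set of pairwise commuting elements of Equiv.Perm X, each of order a power of p. Then the centralizer of S in Equiv.Perm X is isomorphic as a group to a finite product ∏_{i=1}^{r} A_i ≀ Σ_{n_i}, where each A_i is a finite abelian p-group and each n_i is a positive integer. -/
/-- A factor `A ≀ Σ_n` where `A` is a finite abelian `p`-group and `n` is a positive
integer. -/
structure PWreathFactor (p : ℕ) where
  /-- the abelian group `A` -/
  A : Type
  [instA : CommGroup A]
  [finA : Finite A]
  /-- `A` is a `p`-group -/
  card_pow : ∃ k : ℕ, Nat.card A = p ^ k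
  /-- the degree of the symmetric group -/
  n : ℕ
  n_pos : 0 < n

attribute [instance] PWreathFactor.instA PWreathFactor.finA

theorem Equiv.Perm.apply_inv_self {α : Type*} (f : Equiv.Perm α) (x : α) : f (f⁻¹ x) = x :=
  f.apply_symm_apply x

theorem Equiv.Perm.inv_apply_self {α : Type*} (f : Equiv.Perm α) (x : α) : f⁻¹ (f x) = x :=
  f.symm_apply_apply x

namespace CentWreath

variable {r : ℕ} (A : Fin r → Type) [∀ i, CommGroup (A i)] (n : Fin r → ℕ)

/-- The model space. -/
abbrev MSpace : Type := Σ i : Fin r, Fin (n i) × A i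

lemma sigma_snd {ι : Type*} {β : ι → Type*} {i : ι} {x y : β i}
    (h : (⟨i, x⟩ : Σ j, β j) = ⟨i, y⟩) : x = y := by
  simpa using h

lemma msig (i : Fin r) {p q : Fin (n i) × A i} (h1 : p.1 = q.1) (h2 : p.2 = q.2) :
    (⟨i, p⟩ : MSpace A n) = ⟨i, q⟩ := by
  obtain ⟨p1, p2⟩ := p; obtain ⟨q1, q2⟩ := q
  cases h1; cases h2; rfl

/-- Wreath product elements as permutations of the model space. -/
def wreathToPerm : (∀ i, WreathProduct (A i) (n i)) →* Equiv.Perm (MSpace A n) where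
  toFun w := Equiv.sigmaCongrRight fun i =>
    Equiv.prodShear (w i).right (fun ω => Equiv.mulLeft ((w i).left ((w i).right ω)))
  map_one' := by
    refine Equiv.ext ?_
    rintro ⟨i, ω, a⟩
    refine msig A n i ?_ ?_ <;> simp [Equiv.prodShear]
  map_mul' w v := by
    refine Equiv.ext ?_
    rintro ⟨i, ω, a⟩
    show (⟨i, ((w * v) i).right ω, ((w * v) i).left (((w * v) i).right ω) * a⟩ : MSpace A n) =
      ⟨i, (w i).right ((v i).right ω),
        (w i).left ((w i).right ((v i).right ω)) * ((v i).left ((v i).right ω) * a)⟩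
    refine msig A n i ?_ ?_
    · simp [SemidirectProduct.mul_right]
    · simp only [Pi.mul_apply, SemidirectProduct.mul_left, SemidirectProduct.mul_right,
        permMulAut, MonoidHom.coe_mk, OneHom.coe_mk, MulEquiv.arrowCongr_apply,
        MulEquiv.refl_apply, Equiv.Perm.mul_apply, Equiv.symm_apply_apply, mul_assoc]

lemma wreathToPerm_apply (w : ∀ i, WreathProduct (A i) (n i)) (i : Fin r) (ω : Fin (n i))
    (a : A i) :
    wreathToPerm A n w ⟨i, ω, a⟩ = ⟨i, (w i).right ω, (w i).left ((w i).right ω) * a⟩ := rfl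

variable (G : Type*) [Group G] (π : ∀ i, G →* A i)

/-- The action of `G` on the model space through the `π i`. -/
def modelAct : G →* Equiv.Perm (MSpace A n) where
  toFun g := Equiv.sigmaCongrRight fun i =>
    Equiv.prodCongr (Equiv.refl (Fin (n i))) (Equiv.mulLeft (π i g))
  map_one' := by
    refine Equiv.ext ?_
    rintro ⟨i, ω, a⟩
    refine msig A n i rfl ?_
    simp
  map_mul' g h := by
    refine Equiv.ext ?_
    rintro ⟨i, ω, a⟩
    refine msig A n i rfl ?_
    simp [mul_assoc]
    rfl

lemma modelAct_apply (g : G) (i : Fin r) (ω : Fin (n i)) (a : A i) :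
    modelAct A n G π g ⟨i, ω, a⟩ = ⟨i, ω, π i g * a⟩ := rfl

theorem model_iso (hsurj : ∀ i, Function.Surjective (π i))
    (hker : ∀ i j, (π i).ker = (π j).ker → i = j) :
    Nonempty ((Subgroup.centralizer (Set.range (modelAct A n G π)) : Subgroup _) ≃*
      ∀ i, WreathProduct (A i) (n i)) := by
  classical
  have hmem : ∀ w, wreathToPerm A n w ∈ Subgroup.centralizer (Set.range (modelAct A n G π)) := by
    intro w
    rw [Subgroup.mem_centralizer_iff]
    rintro _ ⟨g, rfl⟩
    refine Equiv.ext ?_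
    rintro ⟨i, ω, a⟩
    simp only [Equiv.Perm.mul_apply, modelAct_apply, wreathToPerm_apply]
    refine msig A n i rfl ?_
    exact (mul_left_comm _ _ _)
  set Φ : (∀ i, WreathProduct (A i) (n i)) →*
      (Subgroup.centralizer (Set.range (modelAct A n G π))) :=
    (wreathToPerm A n).codRestrict _ hmem with hΦ
  have hinj : Function.Injective Φ := by
    rw [injective_iff_map_eq_one]
    intro w hw
    have hw' : wreathToPerm A n w = 1 := congrArg Subtype.val hw
    have key : ∀ (i : Fin r) (ω : Fin (n i)),
        (⟨i, (w i).right ω, (w i).left ((w i).right ω) * 1⟩ : MSpace A n) = ⟨i, ω, 1⟩ := by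
      intro i ω
      rw [← wreathToPerm_apply, hw']
      rfl
    funext i
    have hright : (w i).right = 1 := by
      refine Equiv.ext fun ω => ?_
      have hp := sigma_snd (key i ω)
      simpa using congrArg Prod.fst hp
    have hleft : (w i).left = 1 := by
      funext ω
      have h := key i ω
      rw [hright] at h
      have hp := sigma_snd h
      simpa using congrArg Prod.snd hp
    have : w i = ⟨(w i).left, (w i).right⟩ := rfl
    rw [this, hright, hleft]
    rfl
  have hsurjΦ : Function.Surjective Φ := by
    rintro ⟨c, hcmem⟩
    have hc := (Subgroup.mem_centralizer_iff).mp hcmem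
    have hcomm : ∀ (g : G) (x : MSpace A n),
        modelAct A n G π g (c x) = c (modelAct A n G π g x) := by
      intro g x
      have h := hc _ ⟨g, rfl⟩
      have h2 := congrArg (fun σ : Equiv.Perm (MSpace A n) => σ x) h
      simpa [Equiv.Perm.mul_apply] using h2
    have hcomm' : ∀ (g : G) (x : MSpace A n),
        modelAct A n G π g (c⁻¹ x) = c⁻¹ (modelAct A n G π g x) := by
      intro g x
      have h1 := hcomm g (c⁻¹ x)
      rw [Equiv.Perm.apply_inv_self] at h1
      apply c.injective
      rw [Equiv.Perm.apply_inv_self, ← h1]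
    -- block preservation
    have hblock : ∀ x : MSpace A n, (c x).1 = x.1 := by
      rintro ⟨i, ω, a⟩
      rcases hy : c ⟨i, ω, a⟩ with ⟨j, ω', a'⟩
      have h1 : ∀ g : G, π i g = 1 → π j g = 1 := by
        intro g hg
        have hx : modelAct A n G π g ⟨i, ω, a⟩ = ⟨i, ω, a⟩ := by
          rw [modelAct_apply, hg, one_mul]
        have h := hcomm g ⟨i, ω, a⟩
        rw [hx, hy, modelAct_apply] at h
        have hp := sigma_snd h
        have h5 := congrArg Prod.snd hp
        simp only at h5
        rwa [mul_eq_right] at h5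
      have h2 : ∀ g : G, π j g = 1 → π i g = 1 := by
        intro g hg
        have hx : modelAct A n G π g ⟨j, ω', a'⟩ = ⟨j, ω', a'⟩ := by
          rw [modelAct_apply, hg, one_mul]
        have hcinv : c⁻¹ ⟨j, ω', a'⟩ = ⟨i, ω, a⟩ := by rw [← hy]; simp
        have h := hcomm' g ⟨j, ω', a'⟩
        rw [hcinv, hx, hcinv, modelAct_apply] at h
        have hp := sigma_snd h
        have h5 := congrArg Prod.snd hp
        simp only at h5
        rwa [mul_eq_right] at h5
      have hk : (π i).ker = (π j).ker := by
        ext g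
        simp only [MonoidHom.mem_ker]
        exact ⟨h1 g, h2 g⟩
      exact (hker i j hk).symm
    have hblock' : ∀ x : MSpace A n, (c⁻¹ x).1 = x.1 := by
      intro x
      have h := hblock (c⁻¹ x)
      rw [Equiv.Perm.apply_inv_self] at h
      exact h.symm
    -- base point images
    have hex : ∀ (i : Fin r) (ω : Fin (n i)), ∃ pr : Fin (n i) × A i,
        c ⟨i, ω, (1 : A i)⟩ = ⟨i, pr.1, pr.2⟩ := by
      intro i ω
      rcases hy : c ⟨i, ω, 1⟩ with ⟨j, ω', a'⟩
      have hj : j = i := by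
        have h := hblock ⟨i, ω, 1⟩
        rw [hy] at h
        exact h
      subst hj
      exact ⟨(ω', a'), rfl⟩
    have hex' : ∀ (i : Fin r) (ω : Fin (n i)), ∃ pr : Fin (n i) × A i,
        c⁻¹ ⟨i, ω, (1 : A i)⟩ = ⟨i, pr.1, pr.2⟩ := by
      intro i ω
      rcases hy : c⁻¹ ⟨i, ω, 1⟩ with ⟨j, ω', a'⟩
      have hj : j = i := by
        have h := hblock' ⟨i, ω, 1⟩
        rw [hy] at h
        exact h
      subst hj
      exact ⟨(ω', a'), rfl⟩
    choose sf hsf using hex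
    choose sf' hsf' using hex'
    have hformula : ∀ (i : Fin r) (ω : Fin (n i)) (a : A i),
        c ⟨i, ω, a⟩ = ⟨i, (sf i ω).1, (sf i ω).2 * a⟩ := by
      intro i ω a
      obtain ⟨g, hg⟩ := hsurj i a
      have hx : modelAct A n G π g ⟨i, ω, 1⟩ = ⟨i, ω, a⟩ := by
        rw [modelAct_apply, mul_one, hg]
      have h := hcomm g ⟨i, ω, 1⟩
      rw [hx, hsf i ω, modelAct_apply] at h
      rw [← h, hg]
      refine msig A n i rfl ?_
      exact mul_comm _ _
    have hformula' : ∀ (i : Fin r) (ω : Fin (n i)) (a : A i),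
        c⁻¹ ⟨i, ω, a⟩ = ⟨i, (sf' i ω).1, (sf' i ω).2 * a⟩ := by
      intro i ω a
      obtain ⟨g, hg⟩ := hsurj i a
      have hx : modelAct A n G π g ⟨i, ω, 1⟩ = ⟨i, ω, a⟩ := by
        rw [modelAct_apply, mul_one, hg]
      have h := hcomm' g ⟨i, ω, 1⟩
      rw [hx, hsf' i ω, modelAct_apply] at h
      rw [← h, hg]
      refine msig A n i rfl ?_
      exact mul_comm _ _
    have hs1 : ∀ (i : Fin r) (ω : Fin (n i)), (sf' i (sf i ω).1).1 = ω := by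
      intro i ω
      have h := congrArg (fun x => c⁻¹ x) (hsf i ω)
      simp only [Equiv.Perm.inv_apply_self] at h
      rw [hformula' i (sf i ω).1 (sf i ω).2] at h
      have hp := sigma_snd h
      exact (congrArg Prod.fst hp).symm
    have hs2 : ∀ (i : Fin r) (ω : Fin (n i)), (sf i (sf' i ω).1).1 = ω := by
      intro i ω
      have h := congrArg (fun x => c x) (hsf' i ω)
      simp only [Equiv.Perm.apply_inv_self] at h
      rw [hformula i (sf' i ω).1 (sf' i ω).2] at h
      have hp := sigma_snd h
      exact (congrArg Prod.fst hp).symm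
    set sE : ∀ i : Fin r, Equiv.Perm (Fin (n i)) := fun i =>
      ⟨fun ω => (sf i ω).1, fun ω => (sf' i ω).1, hs1 i, hs2 i⟩ with hsE
    refine ⟨fun i => ⟨fun ω' => (sf i ((sE i).symm ω')).2, sE i⟩, ?_⟩
    apply Subtype.ext
    show wreathToPerm A n _ = c
    refine Equiv.ext ?_
    rintro ⟨i, ω, a⟩
    rw [wreathToPerm_apply, hformula]
    show (⟨i, (sf i ω).1, (sf i ((sE i).symm ((sE i) ω))).2 * a⟩ : MSpace A n) = _
    rw [Equiv.symm_apply_apply]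
  exact ⟨(MulEquiv.ofBijective Φ ⟨hinj, hsurjΦ⟩).symm⟩

end CentWreath
namespace CentWreath

/-- Conjugation of permutation groups by an equivalence, as a `MulEquiv`. -/
def permCongrMul {α β : Type*} (e : α ≃ β) : Equiv.Perm α ≃* Equiv.Perm β where
  toFun σ := (e.symm.trans σ).trans e
  invFun τ := (e.trans τ).trans e.symm
  left_inv σ := by ext x; simp
  right_inv τ := by ext x; simp
  map_mul' σ τ := by ext x; simp [Equiv.Perm.mul_apply]

lemma permCongrMul_apply {α β : Type*} (e : α ≃ β) (σ : Equiv.Perm α) (b : β) :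
    permCongrMul e σ b = e (σ (e.symm b)) := rfl

/-- Centralizers correspond under a group isomorphism. -/
def centralizerCongr {G H : Type*} [Group G] [Group H] (e : G ≃* H) (s : Set G) :
    Subgroup.centralizer s ≃* Subgroup.centralizer (e '' s) where
  toFun c := ⟨e (c : G), by
    rw [Subgroup.mem_centralizer_iff]
    rintro _ ⟨g, hg, rfl⟩
    rw [← map_mul, ← map_mul, (Subgroup.mem_centralizer_iff.mp c.2) g hg]⟩
  invFun d := ⟨e.symm (d : H), by
    rw [Subgroup.mem_centralizer_iff]
    intro g hg
    apply e.injective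
    rw [map_mul, map_mul, MulEquiv.apply_symm_apply]
    exact (Subgroup.mem_centralizer_iff.mp d.2) (e g) ⟨g, hg, rfl⟩⟩
  left_inv c := Subtype.ext (e.symm_apply_apply (c : G))
  right_inv d := Subtype.ext (e.apply_symm_apply (d : H))
  map_mul' c d := Subtype.ext (map_mul e (c : G) (d : G))

open MulAction in
theorem aux {X : Type*} [Fintype X] (p : ℕ) (hp : p.Prime) (P : Subgroup (Equiv.Perm X))
    (hP : ∀ a b : ↥P, a * b = b * a) (hpg : IsPGroup p ↥P) :
    ∃ (r : ℕ) (F : Fin r → PWreathFactor p),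
      Nonempty ((Subgroup.centralizer (P : Set (Equiv.Perm X))) ≃*
        ∀ i : Fin r, WreathProduct (F i).A (F i).n) := by
  classical
  haveI : Fact p.Prime := ⟨hp⟩
  letI hnormal : ∀ H : Subgroup ↥P, H.Normal := fun H => ⟨fun h hh g => by
    have hconj : g * h * g⁻¹ = h := by
      rw [hP g h, mul_assoc, mul_inv_cancel, mul_one]
    rwa [hconj]⟩
  have hstab : ∀ (g : ↥P) (x : X), stabilizer ↥P (g • x) = stabilizer ↥P x := by
    intro g x
    ext h
    have hcomm : h • g • x = g • h • x := by
      rw [smul_smul, smul_smul, hP h g]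
    simp only [mem_stabilizer_iff]
    constructor
    · intro hh
      rw [hcomm] at hh
      exact smul_left_cancel g hh
    · intro hh
      rw [hcomm, hh]
  let Q := Quotient (orbitRel ↥P X)
  let stQ : Q → Subgroup ↥P := Quotient.lift (fun x => stabilizer ↥P x) (by
    intro a b hab
    obtain ⟨g, hg⟩ := mem_orbit_iff.mp ((orbitRel_apply).mp hab)
    show stabilizer ↥P a = stabilizer ↥P b
    rw [← hg, hstab])
  haveI : Finite ↥(Set.range stQ) := (Set.finite_range stQ).to_subtype
  let r := Nat.card ↥(Set.range stQ)
  let eI : Fin r ≃ ↥(Set.range stQ) := (Finite.equivFin _).symm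
  let HH : Fin r → Subgroup ↥P := fun i => (eI i : Subgroup ↥P)
  have HHinj : Function.Injective HH := fun i j h => eI.injective (Subtype.ext h)
  letI instQt : ∀ i, CommGroup (↥P ⧸ HH i) := fun i =>
    { (inferInstance : Group (↥P ⧸ HH i)) with
      mul_comm := fun a b => QuotientGroup.induction_on a fun x =>
        QuotientGroup.induction_on b fun y => by
          rw [← QuotientGroup.mk_mul, ← QuotientGroup.mk_mul, hP x y] }
  haveI : ∀ i, Finite (↥P ⧸ HH i) := fun i => Quotient.finite _
  haveI hsmall : ∀ i, Small.{0} (↥P ⧸ HH i) := fun _ => inferInstance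
  let AA : Fin r → Type := fun i => Shrink (↥P ⧸ HH i)
  letI instAA : ∀ i, CommGroup (AA i) := fun _ => inferInstance
  let eAm : ∀ i, AA i ≃* ↥P ⧸ HH i := fun i => Shrink.mulEquiv
  let π : ∀ i, ↥P →* AA i := fun i =>
    ((eAm i).symm.toMonoidHom).comp (QuotientGroup.mk' (HH i))
  have hπ_apply : ∀ i g, π i g = (eAm i).symm (QuotientGroup.mk g) := fun i g => rfl
  have hπsurj : ∀ i, Function.Surjective (π i) := by
    intro i b
    obtain ⟨g, hg⟩ := QuotientGroup.mk'_surjective (HH i) ((eAm i) b)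
    exact ⟨g, by rw [hπ_apply]; show (eAm i).symm _ = b; rw [show QuotientGroup.mk g = QuotientGroup.mk' (HH i) g from rfl, hg, MulEquiv.symm_apply_apply]⟩
  have hπker : ∀ i, (π i).ker = HH i := by
    intro i
    ext g
    rw [MonoidHom.mem_ker, hπ_apply]
    rw [show (1 : AA i) = (eAm i).symm 1 from (map_one _).symm]
    rw [(eAm i).symm.injective.eq_iff]
    exact QuotientGroup.eq_one_iff g
  have hker : ∀ i j, (π i).ker = (π j).ker → i = j := fun i j h =>
    HHinj (by rw [← hπker i, ← hπker j, h])
  -- fibers of the orbit-type map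
  let fib : Fin r → Type _ := fun i => {q : Q // stQ q = HH i}
  let nn : Fin r → ℕ := fun i => Nat.card (fib i)
  let eF : ∀ i, Fin (nn i) ≃ fib i := fun i => (Finite.equivFin _).symm
  have hnpos : ∀ i, 0 < nn i := by
    intro i
    have hne : Nonempty (fib i) := by
      obtain ⟨q, hq⟩ := (eI i).2
      exact ⟨⟨q, hq⟩⟩
    exact Nat.card_pos
  let rep : ∀ i, Fin (nn i) → X := fun i ω => ((eF i ω : Q)).out
  have hstQ_mk : ∀ x : X, stQ (Quotient.mk (orbitRel ↥P X) x) = stabilizer ↥P x := fun x => rfl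
  have hrep_st : ∀ i ω, stabilizer ↥P (rep i ω) = HH i := by
    intro i ω
    have h2 : (Quotient.mk _ (rep i ω) : Q) = (eF i ω : Q) := Quotient.out_eq _
    rw [← hstQ_mk, h2]
    exact (eF i ω).2
  have hact : ∀ (i : Fin r) (ω : Fin (nn i)) (u v : ↥P),
      (QuotientGroup.mk u : ↥P ⧸ HH i) = QuotientGroup.mk v → u • rep i ω = v • rep i ω := by
    intro i ω u v h
    have hm : u⁻¹ * v ∈ HH i := QuotientGroup.eq.mp h
    rw [← hrep_st i ω, mem_stabilizer_iff] at hm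
    have h3 : v • rep i ω = u • ((u⁻¹ * v) • rep i ω) := by
      rw [← mul_smul, mul_inv_cancel_left]
    rw [h3, hm]
  -- the global equivariant bijection
  let Fm : MSpace AA nn → X := fun y => ((eAm y.1 y.2.2 : ↥P ⧸ HH y.1)).out • rep y.1 y.2.1
  have hFm : ∀ i ω a, Fm ⟨i, ω, a⟩ = ((eAm i a : ↥P ⧸ HH i)).out • rep i ω := fun _ _ _ => rfl
  have hFequiv : ∀ (g : ↥P) (y : MSpace AA nn),
      (g : Equiv.Perm X) (Fm y) = Fm (modelAct AA nn ↥P π g y) := by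
    rintro g ⟨i, ω, a⟩
    rw [modelAct_apply, hFm, hFm]
    have hsmul : ∀ (u : ↥P) (z : X), (u : Equiv.Perm X) z = u • z := fun _ _ => rfl
    rw [hsmul, ← mul_smul]
    refine (hact i ω _ _ ?_).symm
    rw [QuotientGroup.out_eq']
    have : (eAm i) (π i g * a) = QuotientGroup.mk g * (eAm i a) := by
      rw [map_mul, hπ_apply, MulEquiv.apply_symm_apply]
    rw [this, QuotientGroup.mk_mul, QuotientGroup.out_eq']
  have hFst : ∀ y, stabilizer ↥P (Fm y) = HH y.1 := by
    rintro ⟨i, ω, a⟩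
    rw [hFm]
    show stabilizer ↥P (_ • rep i ω) = HH i
    rw [hstab, hrep_st]
  have hForb : ∀ y, (Quotient.mk _ (Fm y) : Q) = (eF y.1 y.2.1 : Q) := by
    rintro ⟨i, ω, a⟩
    rw [hFm]
    have h1 : (Quotient.mk _ (((eAm i a : ↥P ⧸ HH i)).out • rep i ω) : Q) =
        Quotient.mk _ (rep i ω) :=
      Quotient.sound (orbitRel_apply.mpr (mem_orbit_iff.mpr ⟨_, rfl⟩))
    rw [h1]
    exact Quotient.out_eq _
  have hFinj : Function.Injective Fm := by
    rintro ⟨i, ω, a⟩ ⟨j, ω', a'⟩ h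
    have hij : i = j := HHinj (by rw [← hFst ⟨i, ω, a⟩, ← hFst ⟨j, ω', a'⟩, h])
    subst hij
    have hω : ω = ω' := by
      have h2 := hForb ⟨i, ω, a⟩
      have h3 := hForb ⟨i, ω', a'⟩
      have h4 : (eF i ω : Q) = (eF i ω' : Q) := by rw [← h2, ← h3, h]
      exact (eF i).injective (Subtype.ext h4)
    subst hω
    have ha : a = a' := by
      have hu := h
      rw [hFm, hFm] at hu
      have hmem2 : ∀ u : ↥P, u ∈ stabilizer ↥P (rep i ω) → u ∈ HH i := by
        intro u hu2
        rwa [hrep_st i ω] at hu2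
      have hs : ((eAm i a : ↥P ⧸ HH i)).out⁻¹ * ((eAm i a' : ↥P ⧸ HH i)).out ∈ HH i := by
        refine hmem2 _ ?_
        rw [mem_stabilizer_iff, mul_smul, ← hu, inv_smul_smul]
      have h5 : (eAm i a : ↥P ⧸ HH i) = eAm i a' := by
        rw [← QuotientGroup.out_eq' (eAm i a), ← QuotientGroup.out_eq' (eAm i a')]
        exact QuotientGroup.eq.mpr hs
      exact (eAm i).injective h5
    rw [ha]
  have hFsurj : Function.Surjective Fm := by
    intro x
    have hqmem : stQ (Quotient.mk (orbitRel ↥P X) x) ∈ Set.range stQ := ⟨_, rfl⟩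
    let i : Fin r := eI.symm ⟨stQ (Quotient.mk (orbitRel ↥P X) x), hqmem⟩
    have hHi : stQ (Quotient.mk (orbitRel ↥P X) x) = HH i := by
      show _ = ((eI (eI.symm ⟨_, hqmem⟩) : ↥(Set.range stQ)) : Subgroup ↥P)
      rw [Equiv.apply_symm_apply]
    let q : fib i := ⟨Quotient.mk (orbitRel ↥P X) x, hHi⟩
    let ω := (eF i).symm q
    have hrep2 : rep i ω = (Quotient.mk (orbitRel ↥P X) x : Q).out := by
      show ((eF i ((eF i).symm q) : Q)).out = _
      rw [Equiv.apply_symm_apply]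
    have hout : (Quotient.mk (orbitRel ↥P X) ((Quotient.mk (orbitRel ↥P X) x : Q).out) : Q) = Quotient.mk (orbitRel ↥P X) x :=
      Quotient.out_eq _
    have hx : x ∈ orbit ↥P (Quotient.mk (orbitRel ↥P X) x : Q).out := by
      have h7 : (orbitRel ↥P X) ((Quotient.mk (orbitRel ↥P X) x : Q).out) x :=
        Quotient.exact hout
      rw [← orbitRel_apply]
      exact (orbitRel ↥P X).symm' h7
    obtain ⟨g, hg⟩ := mem_orbit_iff.mp hx
    refine ⟨⟨i, ω, (eAm i).symm (QuotientGroup.mk g)⟩, ?_⟩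
    rw [hFm, MulEquiv.apply_symm_apply]
    rw [hact i ω _ g (by rw [QuotientGroup.out_eq']), hrep2]
    exact hg
  let Fequiv : MSpace AA nn ≃ X := Equiv.ofBijective Fm ⟨hFinj, hFsurj⟩
  -- conjugation
  let conj : Equiv.Perm X ≃* Equiv.Perm (MSpace AA nn) := permCongrMul Fequiv.symm
  have hconj : ∀ g : ↥P, conj (↑g) = modelAct AA nn ↥P π g := by
    intro g
    refine Equiv.ext fun y => ?_
    show Fequiv.symm ((↑g : Equiv.Perm X) (Fequiv y)) = _
    rw [show Fequiv y = Fm y from rfl, hFequiv g y,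
      show Fm (modelAct AA nn ↥P π g y) = Fequiv (modelAct AA nn ↥P π g y) from rfl,
      Equiv.symm_apply_apply]
  have himg : conj '' (P : Set (Equiv.Perm X)) = Set.range (modelAct AA nn ↥P π) := by
    ext σ
    constructor
    · rintro ⟨τ, hτ, rfl⟩
      exact ⟨⟨τ, hτ⟩, (hconj ⟨τ, hτ⟩).symm⟩
    · rintro ⟨g, rfl⟩
      exact ⟨↑g, g.2, hconj g⟩
  obtain ⟨md⟩ := model_iso AA nn ↥P π hπsurj hker
  -- the factors
  let F : Fin r → PWreathFactor p := fun i =>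
    { A := AA i
      instA := instAA i
      finA := Finite.of_equiv _ (equivShrink _)
      card_pow := by
        obtain ⟨k, hk⟩ := IsPGroup.exists_card_eq (hpg.to_quotient (HH i))
        exact ⟨k, by rw [Nat.card_congr (equivShrink (↥P ⧸ HH i)).symm, hk]⟩
      n := nn i
      n_pos := hnpos i }
  refine ⟨r, F, ⟨?_⟩⟩
  exact ((centralizerCongr conj (P : Set (Equiv.Perm X))).trans
    ((MulEquiv.subgroupCongr (congrArg Subgroup.centralizer himg)).trans md))

end CentWreath


/-- Let `p` be a prime, `X` a finite set, and `S` a finite set of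
pairwise commuting elements of `Equiv.Perm X`, each of order a power of `p`.  Then the
centralizer of `S` in `Equiv.Perm X` is isomorphic as a group to a finite product
`∏_{i=1}^{r} A_i ≀ Σ_{n_i}` with each `A_i` a finite abelian `p`-group and each `n_i` a
positive integer. -/
theorem centralizer_comm_ppower_iso_prod_wreath
    {X : Type*} [Fintype X] (p : ℕ) (hp : p.Prime) (S : Finset (Equiv.Perm X))
    (hcomm : ∀ σ ∈ S, ∀ τ ∈ S, σ * τ = τ * σ)
    (horder : ∀ σ ∈ S, ∃ k : ℕ, orderOf σ = p ^ k) :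
    ∃ (r : ℕ) (F : Fin r → PWreathFactor p),
      Nonempty ((Subgroup.centralizer (↑S : Set (Equiv.Perm X))) ≃*
        ∀ i : Fin r, WreathProduct (F i).A (F i).n) := by
  classical
  set P : Subgroup (Equiv.Perm X) := Subgroup.closure ↑S with hPdef
  have hcomm2 : ∀ g ∈ P, P ≤ Subgroup.centralizer {g} := by
    have hcomm1 : ∀ s ∈ S, P ≤ Subgroup.centralizer {s} := by
      intro s hs
      refine (Subgroup.closure_le _).mpr ?_
      intro t ht
      rw [SetLike.mem_coe, Subgroup.mem_centralizer_iff]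
      intro g hg
      rw [Set.mem_singleton_iff] at hg
      subst hg
      exact hcomm _ hs t ht
    intro g hg
    refine (Subgroup.closure_le _).mpr ?_
    intro t ht
    rw [SetLike.mem_coe, Subgroup.mem_centralizer_iff]
    intro h hh
    rw [Set.mem_singleton_iff] at hh
    subst hh
    exact (Subgroup.mem_centralizer_iff.mp (hcomm1 t ht hg) t rfl).symm
  have hP : ∀ a b : ↥P, a * b = b * a := by
    intro a b
    have h := Subgroup.mem_centralizer_iff.mp (hcomm2 (↑a) a.2 b.2) (↑a) rfl
    exact Subtype.ext h
  have hpg : IsPGroup p ↥P := by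
    have hmem : ∀ x ∈ P, ∃ k : ℕ, x ^ p ^ k = 1 := by
      intro x hx
      refine Subgroup.closure_induction ?_ ?_ ?_ ?_ hx
      · intro s hs
        obtain ⟨k, hk⟩ := horder s hs
        exact ⟨k, by rw [← hk]; exact pow_orderOf_eq_one s⟩
      · exact ⟨0, by simp⟩
      · rintro x y hxP hyP ⟨k, hk⟩ ⟨m, hm⟩
        have hxy : Commute x y :=
          Subgroup.mem_centralizer_iff.mp (hcomm2 x hxP hyP) x rfl
        refine ⟨k + m, ?_⟩
        rw [hxy.mul_pow]
        have h1 : x ^ p ^ (k + m) = 1 := by rw [pow_add, pow_mul, hk, one_pow]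
        have h2 : y ^ p ^ (k + m) = 1 := by
          rw [pow_add, mul_comm (p ^ k), pow_mul, hm, one_pow]
        rw [h1, h2, one_mul]
      · rintro x hxP ⟨k, hk⟩
        exact ⟨k, by rw [inv_pow, hk, inv_one]⟩
    intro g
    obtain ⟨k, hk⟩ := hmem (↑g) g.2
    refine ⟨k, Subtype.ext ?_⟩
    push_cast
    exact hk
  have hcent : Subgroup.centralizer (↑S : Set (Equiv.Perm X)) =
      Subgroup.centralizer (P : Set (Equiv.Perm X)) := by
    apply le_antisymm
    · intro c hc
      rw [Subgroup.mem_centralizer_iff]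
      intro g hg
      have hle : P ≤ Subgroup.centralizer {c} := by
        refine (Subgroup.closure_le _).mpr ?_
        intro s hs
        rw [SetLike.mem_coe, Subgroup.mem_centralizer_iff]
        intro h hh
        rw [Set.mem_singleton_iff] at hh
        subst hh
        exact (Subgroup.mem_centralizer_iff.mp hc s hs).symm
      exact (Subgroup.mem_centralizer_iff.mp (hle hg) c rfl).symm
    · exact Subgroup.centralizer_le Subgroup.subset_closure
  obtain ⟨r, F, ⟨iso⟩⟩ := CentWreath.aux p hp P hP hpg
  exact ⟨r, F, ⟨(MulEquiv.subgroupCongr hcent).trans iso⟩⟩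
end

section
/- Let G be an abelian group acting on a finite nonempty set X through a homomorphism ρ : G →* Equiv.Perm X. Then the centralizer of ρ acts transitively on X if and only if any two points of X have equal stabilizer subgroups in G. -/
lemma mem_stabOf_iff {G X : Type*} [Group G] (ρ : G →* Equiv.Perm X) (x : X) (g : G) :
    g ∈ stabOf ρ x ↔ ρ g x = x := Iff.rfl

/-- Let `G` be an abelian group acting on a finite nonempty set `X`
through `ρ : G →* Equiv.Perm X`.  Then the centralizer of `ρ` acts transitively on `X`
if and only if any two points of `X` have equal stabilizer subgroups in `G`. -/
theorem centralizer_transitive_iff_monotypical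
    {G X : Type*} [CommGroup G] [Fintype X] [Nonempty X] (ρ : G →* Equiv.Perm X) :
    (∀ x y : X, ∃ σ ∈ Subgroup.centralizer (Set.range ⇑ρ), σ x = y) ↔
      ∀ x y : X, stabOf ρ x = stabOf ρ y := by
  constructor
  · intro h x y
    obtain ⟨σ, hσ, hxy⟩ := h x y
    ext g
    rw [Subgroup.mem_centralizer_iff] at hσ
    have hc : ρ g * σ = σ * ρ g := hσ (ρ g) ⟨g, rfl⟩
    have hc' : ∀ z, ρ g (σ z) = σ (ρ g z) := fun z => by
      have := congrArg (fun τ : Equiv.Perm X => τ z) hc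
      simpa using this
    simp only [mem_stabOf_iff]
    constructor
    · intro hx
      have := hc' x
      rw [hx, hxy] at this
      exact this
    · intro hy
      have := hc' x
      rw [hxy, hy] at this
      exact σ.injective (by rw [← this, hxy])
  · intro hst x y
    -- key: equal stabilizers transfer equalities of orbit points
    have hiff : ∀ (a b : X), stabOf ρ a = stabOf ρ b →
        ∀ g h : G, ρ g a = ρ h a → ρ g b = ρ h b := by
      intro a b hab g h hgh
      have h1 : ρ (h⁻¹ * g) a = a := by
        rw [map_mul]
        simp [hgh]
      have h2 : ρ (h⁻¹ * g) b = b := by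
        have := (Subgroup.ext_iff.mp hab (h⁻¹ * g)).mp h1
        exact this
      have : ρ h (ρ (h⁻¹ * g) b) = ρ h b := congrArg (ρ h) h2
      rwa [← Equiv.Perm.mul_apply, ← map_mul, mul_inv_cancel_left] at this
    by_cases hy : ∃ g : G, ρ g x = y
    · obtain ⟨g, hg⟩ := hy
      refine ⟨ρ g, ?_, hg⟩
      rw [Subgroup.mem_centralizer_iff]
      rintro _ ⟨h, rfl⟩
      rw [← map_mul, ← map_mul, mul_comm]
    · -- orbits of x and y are disjoint
      have hdisj : ∀ g h : G, ρ g x ≠ ρ h y := by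
        intro g h hgh
        exact hy ⟨h⁻¹ * g, by rw [map_mul]; simp [hgh]⟩
      classical
      set f : X → X := fun z =>
        if hz : ∃ g : G, ρ g x = z then ρ hz.choose y
        else if hz' : ∃ g : G, ρ g y = z then ρ hz'.choose x else z with hf
      have wdx : ∀ (g : G) (z : X), ρ g x = z → f z = ρ g y := by
        intro g z hg
        have hz : ∃ g : G, ρ g x = z := ⟨g, hg⟩
        rw [hf]
        simp only [hz, dif_pos]
        exact hiff x y (hst x y) hz.choose g (hz.choose_spec.trans hg.symm)
      have wdy : ∀ (g : G) (z : X), ρ g y = z → f z = ρ g x := by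
        intro g z hg
        have hz : ¬ ∃ g : G, ρ g x = z := by
          rintro ⟨h, hh⟩
          exact hdisj h g (hh.trans hg.symm)
        have hz' : ∃ g : G, ρ g y = z := ⟨g, hg⟩
        rw [hf]
        simp only [hz, dif_neg, not_false_iff, hz', dif_pos]
        exact hiff y x (hst y x) hz'.choose g (hz'.choose_spec.trans hg.symm)
      have wdn : ∀ z : X, (¬ ∃ g : G, ρ g x = z) → (¬ ∃ g : G, ρ g y = z) → f z = z := by
        intro z h1 h2
        rw [hf]
        simp only [h1, dif_neg, not_false_iff, h2]
      have hinv : Function.Involutive f := by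
        intro z
        by_cases h1 : ∃ g : G, ρ g x = z
        · obtain ⟨g, hg⟩ := h1
          rw [wdx g z hg, wdy g (ρ g y) rfl, hg]
        · by_cases h2 : ∃ g : G, ρ g y = z
          · obtain ⟨g, hg⟩ := h2
            rw [wdy g z hg, wdx g (ρ g x) rfl, hg]
          · rw [wdn z h1 h2, wdn z h1 h2]
      refine ⟨hinv.toPerm f, ?_, ?_⟩
      · rw [Subgroup.mem_centralizer_iff]
        rintro _ ⟨h, rfl⟩
        ext z
        simp only [Equiv.Perm.mul_apply, Function.Involutive.coe_toPerm]
        by_cases h1 : ∃ g : G, ρ g x = z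
        · obtain ⟨g, hg⟩ := h1
          rw [wdx g z hg, wdx (h * g) (ρ h z) (by rw [map_mul]; simp [hg]),
            map_mul]
          rfl
        · by_cases h2 : ∃ g : G, ρ g y = z
          · obtain ⟨g, hg⟩ := h2
            rw [wdy g z hg, wdy (h * g) (ρ h z) (by rw [map_mul]; simp [hg]),
              map_mul]
            rfl
          · rw [wdn z h1 h2, wdn (ρ h z) ?_ ?_]
            · rintro ⟨g, hg⟩
              exact h1 ⟨h⁻¹ * g, by rw [map_mul]; simp [hg]⟩
            · rintro ⟨g, hg⟩
              exact h2 ⟨h⁻¹ * g, by rw [map_mul]; simp [hg]⟩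
      · show f x = y
        rw [wdx 1 x (by simp), map_one]
        simp
end

section
/- Let G be a group acting on a finite set X through a homomorphism ρ : G →* Equiv.Perm X, and suppose X is the disjoint union of two subsets X₁ and X₂, each stable under ρ g for every g ∈ G, so that ρ restricts to actions ρ₁ : G →* Equiv.Perm X₁ and ρ₂ : G →* Equiv.Perm X₂. Then the subgroup of Equiv.Perm X consisting of permutations that lie in the centralizer of ρ and map X₁ into X₁ is isomorphic as a group to the product of the centralizer of ρ₁ in Equiv.Perm X₁ and the centralizer of ρ₂ in Equiv.Perm X₂. -/
/-- The subgroup of `Equiv.Perm X` (for `X` finite) of permutations lying in the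
centralizer of `ρ : G →* Equiv.Perm X` and mapping the subset `X₁` into itself. -/
def centralizerMapsTo {G X : Type*} [Group G] [Finite X]
    (ρ : G →* Equiv.Perm X) (X₁ : Set X) : Subgroup (Equiv.Perm X) where
  carrier := {σ | σ ∈ Subgroup.centralizer (Set.range ⇑ρ) ∧ Set.MapsTo ⇑σ X₁ X₁}
  one_mem' := ⟨one_mem _, fun x hx => by simpa using hx⟩
  mul_mem' := fun {σ τ} hσ hτ =>
    ⟨mul_mem hσ.1 hτ.1, fun x hx => hσ.2 (hτ.2 hx)⟩
  inv_mem' := by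
    rintro σ ⟨hc, hm⟩
    refine ⟨inv_mem hc, ?_⟩
    have hfin : X₁.Finite := Set.toFinite X₁
    have hbij : Set.BijOn ⇑σ X₁ X₁ :=
      ((Set.Finite.injOn_iff_bijOn_of_mapsTo hfin hm).mp (σ.injective.injOn))
    intro x hx
    obtain ⟨y, hy, hyx⟩ := hbij.surjOn hx
    have : σ⁻¹ x = y := by
      rw [← hyx]; exact Equiv.symm_apply_apply σ y
    rw [this]; exact hy

/-- Let `G` act on a finite set `X` through `ρ`, and suppose `X` is the
disjoint union of two subsets `X₁`, `X₂`, each stable under every `ρ g`, so that `ρ`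
restricts to actions `ρ₁ : G →* Equiv.Perm X₁` and `ρ₂ : G →* Equiv.Perm X₂`.  Then the
subgroup of `Equiv.Perm X` of permutations lying in the centralizer of `ρ` and mapping
`X₁` into `X₁` is isomorphic as a group to the product of the centralizers of `ρ₁` and
of `ρ₂`. -/
theorem centralizer_preserving_iso_prod
    {G X : Type*} [Group G] [Finite X] (ρ : G →* Equiv.Perm X) (X₁ X₂ : Set X)
    (hdisj : Disjoint X₁ X₂) (hunion : X₁ ∪ X₂ = Set.univ)
    (hstab₁ : ∀ g : G, ∀ x ∈ X₁, ρ g x ∈ X₁)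
    (hstab₂ : ∀ g : G, ∀ x ∈ X₂, ρ g x ∈ X₂)
    (ρ₁ : G →* Equiv.Perm X₁) (ρ₂ : G →* Equiv.Perm X₂)
    (hρ₁ : ∀ (g : G) (x : X₁), ((ρ₁ g x : X₁) : X) = ρ g (x : X))
    (hρ₂ : ∀ (g : G) (x : X₂), ((ρ₂ g x : X₂) : X) = ρ g (x : X)) :
    Nonempty ((centralizerMapsTo ρ X₁) ≃*
      (Subgroup.centralizer (Set.range ⇑ρ₁)) × (Subgroup.centralizer (Set.range ⇑ρ₂))) := by
  classical
  have hmem : ∀ x : X, x ∈ X₂ ↔ ¬ x ∈ X₁ := by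
    intro x
    constructor
    · intro h2 h1; exact hdisj.le_bot ⟨h1, h2⟩
    · intro h1
      have : x ∈ X₁ ∪ X₂ := hunion ▸ Set.mem_univ x
      exact this.resolve_left h1
  have key : ∀ σ ∈ centralizerMapsTo ρ X₁, ∀ x : X, x ∈ X₁ ↔ σ x ∈ X₁ := by
    intro σ hσ x
    have hbij : Set.BijOn ⇑σ X₁ X₁ :=
      (Set.Finite.injOn_iff_bijOn_of_mapsTo (Set.toFinite X₁) hσ.2).mp σ.injective.injOn
    refine ⟨fun h => hσ.2 h, fun h => ?_⟩
    obtain ⟨y, hy, hyx⟩ := hbij.surjOn h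
    rwa [← σ.injective hyx]
  have key₂ : ∀ σ ∈ centralizerMapsTo ρ X₁, ∀ x : X, x ∈ X₂ ↔ σ x ∈ X₂ := by
    intro σ hσ x
    rw [hmem, hmem, not_iff_not]
    exact key σ hσ x
  -- commuting, pointwise
  have hcomm : ∀ σ ∈ centralizerMapsTo ρ X₁, ∀ (g : G) (x : X),
      ρ g (σ x) = σ (ρ g x) := by
    intro σ hσ g x
    have := Equiv.ext_iff.mp (hσ.1 (ρ g) ⟨g, rfl⟩) x
    simpa using this
  -- the transport between Perm X₂ and Perm {x // ¬ x ∈ X₁}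
  set eT : ↥X₂ ≃ {x : X // ¬ x ∈ X₁} := Equiv.subtypeEquivRight hmem with heT
  -- forward components
  refine ⟨{
    toFun := fun σ =>
      (⟨(σ : Equiv.Perm X).subtypePerm (fun x => (key σ σ.2 x).symm), ?_⟩,
       ⟨(σ : Equiv.Perm X).subtypePerm (fun x => (key₂ σ σ.2 x).symm), ?_⟩)
    invFun := fun ab =>
      ⟨Equiv.Perm.subtypeCongr (ab.1 : Equiv.Perm ↥X₁) (eT.permCongr (ab.2 : Equiv.Perm ↥X₂)), ?_⟩
    left_inv := ?_
    right_inv := ?_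
    map_mul' := ?_ }⟩
  · -- σ₁ centralizes ρ₁
    rw [Subgroup.mem_centralizer_iff]
    rintro - ⟨g, rfl⟩
    ext x
    simp only [Equiv.Perm.mul_apply]
    show ((ρ₁ g) ((σ : Equiv.Perm X).subtypePerm (fun x => (key σ σ.2 x).symm) x) : X)
        = ((σ : Equiv.Perm X).subtypePerm (fun x => (key σ σ.2 x).symm) (ρ₁ g x) : X)
    rw [hρ₁]
    show ρ g ((σ : Equiv.Perm X) (x : X)) = (σ : Equiv.Perm X) (((ρ₁ g x : X₁) : X))
    rw [hρ₁]
    exact hcomm σ σ.2 g x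
  · rw [Subgroup.mem_centralizer_iff]
    rintro - ⟨g, rfl⟩
    ext x
    simp only [Equiv.Perm.mul_apply]
    show ((ρ₂ g) ((σ : Equiv.Perm X).subtypePerm (fun x => (key₂ σ σ.2 x).symm) x) : X)
        = ((σ : Equiv.Perm X).subtypePerm (fun x => (key₂ σ σ.2 x).symm) (ρ₂ g x) : X)
    rw [hρ₂]
    show ρ g ((σ : Equiv.Perm X) (x : X)) = (σ : Equiv.Perm X) (((ρ₂ g x : X₂) : X))
    rw [hρ₂]
    exact hcomm σ σ.2 g x
  · -- glued perm is in the subgroup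
    rename_i ab
    obtain ⟨⟨a, ha⟩, ⟨b, hb⟩⟩ := ab
    constructor
    · rw [Subgroup.mem_centralizer_iff]
      rintro - ⟨g, rfl⟩
      ext x
      simp only [Equiv.Perm.mul_apply]
      by_cases hx : x ∈ X₁
      · rw [Equiv.Perm.subtypeCongr.left_apply _ _ hx,
          Equiv.Perm.subtypeCongr.left_apply _ _ (hstab₁ g x hx)]
        have hcom := Subgroup.mem_centralizer_iff.mp ha (ρ₁ g) ⟨g, rfl⟩
        have hpt := Equiv.ext_iff.mp hcom ⟨x, hx⟩
        simp only [Equiv.Perm.mul_apply] at hpt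
        have harg : (ρ₁ g) ⟨x, hx⟩ = (⟨ρ g x, hstab₁ g x hx⟩ : X₁) :=
          Subtype.ext (hρ₁ g ⟨x, hx⟩)
        calc (ρ g) ((a ⟨x, hx⟩ : X₁) : X) = ((ρ₁ g) (a ⟨x, hx⟩) : X) := (hρ₁ g _).symm
          _ = (a ((ρ₁ g) ⟨x, hx⟩) : X) := by rw [hpt]
          _ = (a ⟨ρ g x, hstab₁ g x hx⟩ : X) := by rw [harg]
      · have hx2 : x ∈ X₂ := (hmem x).mpr hx
        have hgx : ¬ ρ g x ∈ X₁ := (hmem _).mp (hstab₂ g x hx2)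
        rw [Equiv.Perm.subtypeCongr.right_apply _ _ hx,
          Equiv.Perm.subtypeCongr.right_apply _ _ hgx]
        simp only [Equiv.permCongr_apply, heT, Equiv.subtypeEquivRight_symm_apply,
          Equiv.subtypeEquivRight_apply]
        have hcom := Subgroup.mem_centralizer_iff.mp hb (ρ₂ g) ⟨g, rfl⟩
        have hpt := Equiv.ext_iff.mp hcom ⟨x, hx2⟩
        simp only [Equiv.Perm.mul_apply] at hpt
        have harg : (ρ₂ g) ⟨x, hx2⟩ = (⟨ρ g x, hstab₂ g x hx2⟩ : X₂) :=
          Subtype.ext (hρ₂ g ⟨x, hx2⟩)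
        calc (ρ g) ((b ⟨x, hx2⟩ : X₂) : X) = ((ρ₂ g) (b ⟨x, hx2⟩) : X) := (hρ₂ g _).symm
          _ = (b ((ρ₂ g) ⟨x, hx2⟩) : X) := by rw [hpt]
          _ = (b ⟨ρ g x, hstab₂ g x hx2⟩ : X) := by rw [harg]
    · intro x hx
      rw [Equiv.Perm.subtypeCongr.left_apply _ _ hx]
      exact (a ⟨x, hx⟩).2
  · -- left inverse
    intro σ
    refine Subtype.ext ?_
    ext x
    by_cases hx : x ∈ X₁
    · rw [Equiv.Perm.subtypeCongr.left_apply _ _ hx]; rfl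
    · rw [Equiv.Perm.subtypeCongr.right_apply _ _ hx]
      simp only [Equiv.permCongr_apply, heT, Equiv.subtypeEquivRight_symm_apply,
        Equiv.subtypeEquivRight_apply]
      rfl
  · -- right inverse
    rintro ⟨⟨a, ha⟩, ⟨b, hb⟩⟩
    refine Prod.ext (Subtype.ext ?_) (Subtype.ext ?_)
    · ext x
      show (Equiv.Perm.subtypeCongr a (eT.permCongr b)) (x : X) = (a x : X)
      rw [Equiv.Perm.subtypeCongr.left_apply _ _ x.2]
    · ext x
      show (Equiv.Perm.subtypeCongr a (eT.permCongr b)) (x : X) = (b x : X)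
      rw [Equiv.Perm.subtypeCongr.right_apply _ _ ((hmem (x : X)).mp x.2)]
      simp only [Equiv.permCongr_apply, heT, Equiv.subtypeEquivRight_symm_apply,
        Equiv.subtypeEquivRight_apply]
  · -- multiplicative
    intro σ τ
    refine Prod.ext (Subtype.ext ?_) (Subtype.ext ?_) <;> ext x <;> exact rfl
end

section
/- Let G be an abelian group acting on a finite nonempty set X through a homomorphism ρ : G →* Equiv.Perm X, and suppose any two points of X have equal stabilizer subgroups in G; let l be the common cardinality of the G-orbits in X. Then for every natural number m with 0 ≤ m ≤ |X|, there exists a subset S ⊆ X with |S| = m and ρ g '' S = S for all g ∈ G if and only if l divides m. -/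
section Aux

variable {G X : Type*} [CommGroup G] [Fintype X] (ρ : G →* Equiv.Perm X)

/-- orbit of x -/
def orbOf (x : X) : Set X := {y | ∃ g : G, ρ g x = y}

lemma mem_orbOf_self (x : X) : x ∈ orbOf ρ x := ⟨1, by simp⟩

lemma orbOf_eq {x y : X} (h : y ∈ orbOf ρ x) : orbOf ρ y = orbOf ρ x := by
  obtain ⟨g, rfl⟩ := h
  ext z
  constructor
  · rintro ⟨h, rfl⟩
    exact ⟨h * g, by simp [map_mul]⟩
  · rintro ⟨h, rfl⟩
    exact ⟨h * g⁻¹, by simp [map_mul, ← Equiv.Perm.mul_apply, ← map_mul]⟩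

lemma image_orbOf (g : G) (x : X) : ⇑(ρ g) '' orbOf ρ x = orbOf ρ x := by
  ext z
  constructor
  · rintro ⟨w, ⟨h, rfl⟩, rfl⟩
    exact ⟨g * h, by simp [map_mul]⟩
  · rintro ⟨h, rfl⟩
    exact ⟨ρ (g⁻¹ * h) x, ⟨g⁻¹ * h, rfl⟩, by
      simp [map_mul, ← Equiv.Perm.mul_apply, ← map_mul, mul_assoc]⟩

lemma orbOf_subset {S : Set X} (hS : ∀ g : G, ⇑(ρ g) '' S = S) {x : X} (hx : x ∈ S) :
    orbOf ρ x ⊆ S := by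
  rintro z ⟨g, rfl⟩
  rw [← hS g]
  exact ⟨x, hx, rfl⟩

lemma dvd_ncard_of_invariant (l : ℕ)
    (hl : ∀ x : X, (orbOf ρ x).ncard = l)
    (S : Set X) (hS : ∀ g : G, ⇑(ρ g) '' S = S) : l ∣ S.ncard := by
  generalize hn : S.ncard = n
  induction n using Nat.strong_induction_on generalizing S with
  | _ n ih =>
    rcases S.eq_empty_or_nonempty with rfl | ⟨x, hx⟩
    · rw [← hn]; simp
    have horb : orbOf ρ x ⊆ S := orbOf_subset ρ hS hx
    have hl0 : 0 < l := by
      rw [← hl x]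
      exact (Set.ncard_pos (Set.toFinite _)).2 ⟨x, mem_orbOf_self ρ x⟩
    -- S = orbOf x ∪ (S \ orbOf x)
    have hsplit : S = orbOf ρ x ∪ (S \ orbOf ρ x) := by
      rw [Set.union_diff_cancel' (le_refl _) horb]
    have hdisj : Disjoint (orbOf ρ x) (S \ orbOf ρ x) := Set.disjoint_sdiff_right
    have hcard : S.ncard = l + (S \ orbOf ρ x).ncard := by
      conv_lhs => rw [hsplit]
      rw [Set.ncard_union_eq hdisj (Set.toFinite _) (Set.toFinite _), hl x]
    have hinv : ∀ g : G, ⇑(ρ g) '' (S \ orbOf ρ x) = S \ orbOf ρ x := by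
      intro g
      rw [Set.image_diff (Equiv.injective _), hS g, image_orbOf]
    have hlt : (S \ orbOf ρ x).ncard < n := by
      have : 0 < (orbOf ρ x).ncard := (Set.ncard_pos (Set.toFinite _)).2 ⟨x, mem_orbOf_self ρ x⟩
      omega
    have hdvd := ih _ hlt _ hinv rfl
    rw [← hn, hcard]
    exact Nat.dvd_add dvd_rfl hdvd

lemma exists_invariant (l : ℕ)
    (hl : ∀ x : X, (orbOf ρ x).ncard = l) :
    ∀ m : ℕ, m ≤ Fintype.card X → l ∣ m →
      ∃ S : Set X, S.ncard = m ∧ ∀ g : G, ⇑(ρ g) '' S = S := by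
  intro m
  induction m using Nat.strong_induction_on with
  | _ m ih =>
    intro hm hdvd
    rcases Nat.eq_zero_or_pos m with rfl | hpos
    · exact ⟨∅, by simp⟩
    have hl0 : 0 < l := by
      rcases isEmpty_or_nonempty X with h | h
      · have := Fintype.card_eq_zero (α := X); omega
      obtain ⟨x⟩ := h
      rw [← hl x]
      exact (Set.ncard_pos (Set.toFinite _)).2 ⟨x, mem_orbOf_self ρ x⟩
    have hlm : l ≤ m := Nat.le_of_dvd hpos hdvd
    obtain ⟨S', hS'card, hS'inv⟩ := ih (m - l) (by omega) (by omega)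
      ((Nat.dvd_sub hdvd dvd_rfl))
    -- S' ≠ univ, pick x ∉ S'
    have hne : S' ≠ Set.univ := by
      intro h
      rw [h, Set.ncard_univ, Nat.card_eq_fintype_card] at hS'card
      omega
    obtain ⟨x, hx⟩ : ∃ x, x ∉ S' := by
      by_contra h
      push_neg at h
      exact hne (Set.eq_univ_of_forall h)
    have hdisj : Disjoint S' (orbOf ρ x) := by
      rw [Set.disjoint_right]
      rintro z hz hzS
      exact hx (orbOf_subset ρ hS'inv hzS (by rw [orbOf_eq ρ hz]; exact mem_orbOf_self ρ x))
    refine ⟨S' ∪ orbOf ρ x, ?_, ?_⟩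
    · rw [Set.ncard_union_eq hdisj (Set.toFinite _) (Set.toFinite _), hS'card, hl x]
      omega
    · intro g
      rw [Set.image_union, hS'inv g, image_orbOf]

end Aux

/-- Let `G` be an abelian group acting on a finite nonempty set `X`
through `ρ`, with all point stabilizers equal, and let `l` be the common cardinality of
the `G`-orbits.  Then for every `m` with `0 ≤ m ≤ |X|`, there is a subset `S ⊆ X` with
`|S| = m` and `ρ g '' S = S` for all `g` if and only if `l` divides `m`. -/
theorem invariant_subset_iff_dvd
    {G X : Type*} [CommGroup G] [Fintype X] [Nonempty X] (ρ : G →* Equiv.Perm X)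
    (hmono : ∀ x y : X, stabOf ρ x = stabOf ρ y) (l : ℕ)
    (hl : ∀ x : X, Nat.card {y : X // ∃ g : G, ρ g x = y} = l) :
    ∀ m : ℕ, m ≤ Fintype.card X →
      ((∃ S : Set X, S.ncard = m ∧ ∀ g : G, ⇑(ρ g) '' S = S) ↔ l ∣ m) := by
  have hl' : ∀ x : X, (orbOf ρ x).ncard = l := by
    intro x
    rw [← Nat.card_coe_set_eq]
    exact hl x
  intro m hm
  constructor
  · rintro ⟨S, rfl, hS⟩
    exact dvd_ncard_of_invariant ρ l hl' S hS
  · exact exists_invariant ρ l hl' m hm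
end

section
/- Let A be a nontrivial abelian group and n : ℕ. The center of the wreath product A ≀ Σ_n equals the range of the diagonal homomorphism z : A →* A ≀ Σ_n sending a to (fun _ => a, 1). -/
/-- The diagonal homomorphism `z : A →* A ≀ Σ_n`, `a ↦ (fun _ => a, 1)`. -/
def wreathDiag (A : Type*) [CommGroup A] (n : ℕ) : A →* WreathProduct A n where
  toFun a := ⟨fun _ => a, 1⟩
  map_one' := rfl
  map_mul' a b := rfl

/-- Let `A` be a nontrivial abelian group and `n : ℕ`.  The center of
the wreath product `A ≀ Σ_n` equals the range of the diagonal homomorphism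
`z : A →* A ≀ Σ_n` sending `a` to `(fun _ => a, 1)`. -/
theorem center_wreath_eq_diag_range
    (A : Type*) [CommGroup A] [Nontrivial A] (n : ℕ) :
    Subgroup.center (WreathProduct A n) = (wreathDiag A n).range := by
  ext x
  rw [Subgroup.mem_center_iff]
  constructor
  · intro hx
    obtain ⟨a, ha⟩ := exists_ne (1 : A)
    -- σ = 1
    have key : ∀ i, x.right⁻¹ i = i := by
      intro i
      by_contra hni
      have h2 : a * x.left i
          = x.left i * ((permMulAut A n) x.right) (fun j => if j = i then a else 1) i := by
        simpa using congrFun (congrArg SemidirectProduct.left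
          (hx ⟨fun j => if j = i then a else 1, 1⟩)) i
      have hz : ((permMulAut A n) x.right) (fun j => if j = i then a else 1) i = 1 := by
        show (if x.right⁻¹ i = i then a else 1) = 1
        rw [if_neg hni]
      rw [hz, mul_one] at h2
      exact ha (mul_eq_right.mp h2)
    have hσ : x.right = 1 := inv_eq_one.mp (Equiv.ext key)
    -- f constant
    have hconst : ∀ i j : Fin n, x.left i = x.left j := by
      intro i j
      have h2 := congrFun (congrArg SemidirectProduct.left
        (hx ⟨1, Equiv.swap i j⟩)) i
      simp only [SemidirectProduct.mul_left, Pi.mul_apply, Pi.one_apply, one_mul,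
        hσ, map_one, MulAut.one_apply, mul_one] at h2
      have : ((permMulAut A n) (Equiv.swap i j)) x.left i = x.left j := by
        show x.left ((Equiv.swap i j)⁻¹ i) = x.left j
        rw [Equiv.swap_inv, Equiv.swap_apply_left]
      rw [this] at h2
      exact h2.symm
    rcases Nat.eq_zero_or_pos n with hn | hn
    · subst hn
      exact ⟨1, by
        have : x = 1 := by
          ext i
          · exact absurd i.2 (by omega)
          · simp [hσ]
        rw [this]; rfl⟩
    · refine ⟨x.left ⟨0, hn⟩, ?_⟩
      have hl : (fun _ : Fin n => x.left ⟨0, hn⟩) = x.left :=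
        funext fun i => hconst ⟨0, hn⟩ i
      show (⟨fun _ => x.left ⟨0, hn⟩, 1⟩ : WreathProduct A n) = x
      rw [hl, ← hσ]
  · rintro ⟨a, rfl⟩ g
    have : g = ⟨g.left, g.right⟩ := rfl
    rw [this]
    show (⟨g.left * (permMulAut A n) g.right (fun _ => a), g.right * 1⟩ : WreathProduct A n)
      = ⟨(fun _ => a) * (permMulAut A n) 1 g.left, 1 * g.right⟩
    have h1 : (permMulAut A n) g.right (fun _ : Fin n => a) = fun _ => a := rfl
    simp [h1, mul_comm]
end

section
/- Let A be an abelian group and n : ℕ. Two elements (f, σ) and (g, τ) of the wreath product A ≀ Σ_n are conjugate in A ≀ Σ_n if and only if there exists π ∈ Equiv.Perm (Fin n) such that π σ π⁻¹ = τ and for every i : Fin n, the product of f over the σ-orbit of i equals the product of g over the τ-orbit of π i; that is, ∏_{j ∈ {j | σ.SameCycle i j}} f j = ∏_{j ∈ {j | τ.SameCycle (π i) j}} g j. -/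
section Aux

variable {A : Type*} [CommGroup A] {n : ℕ}

open Finset Equiv Equiv.Perm

private lemma reindex_prod (π τ : Equiv.Perm (Fin n)) (f : Fin n → A) (i : Fin n) :
    ∏ j ∈ Finset.univ.filter (fun j => τ.SameCycle i j), f j =
      ∏ j ∈ Finset.univ.filter (fun j => ((π * τ * π⁻¹)).SameCycle (π i) j), f (π⁻¹ j) := by
  refine Finset.prod_equiv π ?_ ?_
  · intro j
    simp [Equiv.Perm.sameCycle_conj]
  · intro j _
    simp

private lemma telescope_prod (τ : Equiv.Perm (Fin n)) (h : Fin n → A) (x : Fin n) :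
    ∏ j ∈ Finset.univ.filter (fun j => τ.SameCycle x j), (h j * (h (τ⁻¹ j))⁻¹) = 1 := by
  rw [Finset.prod_mul_distrib, Finset.prod_inv_distrib]
  have : ∏ j ∈ Finset.univ.filter (fun j => τ.SameCycle x j), h (τ⁻¹ j) =
      ∏ j ∈ Finset.univ.filter (fun j => τ.SameCycle x j), h j := by
    refine Finset.prod_equiv (τ⁻¹ : Equiv.Perm (Fin n)) ?_ ?_
    · intro j; simp [Equiv.Perm.sameCycle_symm_apply_right]
    · intro j _; rfl
  rw [this, mul_inv_cancel]

private lemma pow_fix (ρ : Equiv.Perm (Fin n)) (c : Fin n) (hc : ρ c = c) (q : ℕ) :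
    (ρ ^ q) c = c := by
  induction q with
  | zero => simp
  | succ q ih => rw [pow_succ, Equiv.Perm.mul_apply, hc, ih]

private lemma exists_coboundary (τ : Equiv.Perm (Fin n)) (u : Fin n → A)
    (H : ∀ x : Fin n, ∏ j ∈ Finset.univ.filter (fun j => τ.SameCycle x j), u j = 1) :
    ∃ h : Fin n → A, ∀ k, u k = h k * (h (τ⁻¹ k))⁻¹ := by
  classical
  set O : Fin n → Finset (Fin n) := fun x => Finset.univ.filter (fun j => τ.SameCycle x j)
    with hO
  have hmemO : ∀ x j, j ∈ O x ↔ τ.SameCycle x j := by intro x j; simp [hO]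
  have hOeq : ∀ {x y : Fin n}, τ.SameCycle x y → O x = O y := by
    intro x y hxy; ext j
    simp only [hmemO]
    exact ⟨fun h => hxy.symm.trans h, fun h => hxy.trans h⟩
  have hne : ∀ x, (O x).Nonempty := fun x => ⟨x, (hmemO x x).2 (Equiv.Perm.SameCycle.refl τ x)⟩
  set b : Fin n → Fin n := fun x => (O x).min' (hne x) with hb
  have hbmem : ∀ x, τ.SameCycle x (b x) := fun x => (hmemO x _).1 ((O x).min'_mem (hne x))
  have hbex : ∀ x, ∃ m : ℕ, (τ ^ m) (b x) = x := by
    intro x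
    obtain ⟨i, _, hi⟩ := (hbmem x).symm.exists_pow_eq'
    exact ⟨i, hi⟩
  set m : Fin n → ℕ := fun x => Nat.find (hbex x) with hm
  have hmdef : ∀ x, m x = Nat.find (hbex x) := fun _ => rfl
  set h : Fin n → A := fun k => ∏ l ∈ Finset.Icc 1 (m k), u ((τ ^ l) (b k)) with hh
  have hhdef : ∀ x, h x = ∏ l ∈ Finset.Icc 1 (m x), u ((τ ^ l) (b x)) := fun _ => rfl
  refine ⟨h, fun k => ?_⟩
  have hbk : b (τ⁻¹ k) = b k := by
    have : τ.SameCycle k (τ⁻¹ k) :=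
      (Equiv.Perm.sameCycle_symm_apply_right).2 (Equiv.Perm.SameCycle.refl τ k)
    rw [hb]
    simp only [hOeq this]
  rcases Nat.eq_zero_or_pos (m k) with hmk | hmk
  · -- k = b k
    have hbkk : b k = k := by
      have := Nat.find_spec (hbex k)
      rw [← hmdef, hmk, pow_zero] at this
      simpa using this
    set m' : ℕ := m (τ⁻¹ k) with hm'
    have hspec : (τ ^ m') k = τ⁻¹ k := by
      have := Nat.find_spec (hbex (τ⁻¹ k)); rw [← hmdef, ← hm'] at this
      rwa [hbk, hbkk] at this
    have hmin : ∀ j < m', (τ ^ j) k ≠ τ⁻¹ k := by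
      intro j hj
      have := Nat.find_min (hbex (τ⁻¹ k)) (by rw [← hmdef, ← hm']; exact hj)
      rwa [hbk, hbkk] at this
    have hper : (τ ^ (m' + 1)) k = k := by
      rw [pow_succ', Equiv.Perm.mul_apply, hspec]; simp
    -- the range product equals the orbit product
    have key : ∏ l ∈ Finset.range (m' + 1), u ((τ ^ l) k) = 1 := by
      rw [← H k]
      refine Finset.prod_bij (fun l _ => (τ ^ l) k) ?_ ?_ ?_ ?_
      · intro l _
        rw [hmemO]
        exact ⟨(l : ℤ), by simp⟩
      · -- injectivity
        have inj : ∀ a c : ℕ, a ≤ c → c ≤ m' → (τ ^ a) k = (τ ^ c) k → a = c := by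
          intro a c hac hcm heq
          by_contra hne'
          have hlt : a < c := lt_of_le_of_ne hac hne'
          have hd : (τ ^ (c - a)) k = k := by
            have : (τ ^ c) k = (τ ^ a) ((τ ^ (c - a)) k) := by
              rw [← Equiv.Perm.mul_apply, ← pow_add, Nat.add_sub_cancel' hac]
            rw [← heq] at this
            exact ((τ ^ a).injective this.symm)
          have h1 : 1 ≤ c - a := Nat.le_sub_of_add_le (by omega)
          have hkey : (τ ^ (c - a - 1)) k = τ⁻¹ k := by
            have h2 : (τ ^ (c - a)) k = τ ((τ ^ (c - a - 1)) k) := by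
              have hsub : c - a = (c - a - 1) + 1 := by omega
              conv_lhs => rw [hsub]
              rw [pow_succ', Equiv.Perm.mul_apply]
            rw [hd] at h2
            apply τ.injective
            rw [← h2]
            simp
          exact hmin (c - a - 1) (by omega) hkey
        intro a ha c hc heq
        simp only [Finset.mem_range] at ha hc
        rcases le_total a c with hle | hle
        · exact inj a c hle (by omega) heq
        · exact (inj c a hle (by omega) heq.symm).symm
      · -- surjectivity
        intro j hj
        rw [hmemO] at hj
        obtain ⟨t, _, ht⟩ := hj.exists_pow_eq'
        refine ⟨t % (m' + 1), Finset.mem_range.2 (Nat.mod_lt _ (by omega)), ?_⟩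
        show (τ ^ (t % (m' + 1))) k = j
        have : (τ ^ t) k = (τ ^ (t % (m' + 1))) k := by
          conv_lhs => rw [← Nat.mod_add_div t (m' + 1)]
          rw [pow_add, Equiv.Perm.mul_apply, pow_mul, pow_fix _ _ hper]
        rw [← this, ht]
      · intro l _; rfl
    -- conclude
    have hhk : h k = 1 := by
      rw [hhdef, hmk]; simp
    have hhtk : h (τ⁻¹ k) = ∏ l ∈ Finset.Icc 1 m', u ((τ ^ l) k) := by
      rw [hhdef, hbk, hbkk, ← hm']
    have : u k * ∏ l ∈ Finset.Icc 1 m', u ((τ ^ l) k) = 1 := by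
      have hIcc : ∏ l ∈ Finset.range m', u ((τ ^ (l + 1)) k) =
          ∏ l ∈ Finset.Icc 1 m', u ((τ ^ l) k) := by
        refine Finset.prod_bij (fun l _ => l + 1) ?_ ?_ ?_ ?_
        · intro a ha; simp only [Finset.mem_range] at ha; simp only [Finset.mem_Icc]; omega
        · intro a _ c _ hac
          simp only [add_left_inj] at hac
          exact hac
        · intro j hj
          simp only [Finset.mem_Icc] at hj
          refine ⟨j - 1, Finset.mem_range.2 (by omega), by show j - 1 + 1 = j; omega⟩
        · intro a _; rfl
      rw [← key, Finset.prod_range_succ', hIcc, pow_zero]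
      simp [mul_comm]
    rw [hhk, hhtk, one_mul]
    exact eq_inv_of_mul_eq_one_left this
  · -- m k = mm + 1
    obtain ⟨mm, hmm⟩ : ∃ mm, m k = mm + 1 := ⟨m k - 1, by omega⟩
    have h1 : (τ ^ (mm + 1)) (b k) = k := by
      have := Nat.find_spec (hbex k); rw [← hmdef, hmm] at this; exact this
    have h2 : (τ ^ mm) (b k) = τ⁻¹ k := by
      have h2 : τ ((τ ^ mm) (b k)) = k := by
        rw [← Equiv.Perm.mul_apply, ← pow_succ', h1]
      apply τ.injective
      rw [h2]
      simp
    have hm'eq : m (τ⁻¹ k) = mm := by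
      refine le_antisymm (Nat.find_le (by rw [hbk]; exact h2)) ?_
      by_contra hlt
      push_neg at hlt
      have hspec' := Nat.find_spec (hbex (τ⁻¹ k))
      rw [← hmdef] at hspec'
      rw [hbk] at hspec'
      have : (τ ^ (m (τ⁻¹ k) + 1)) (b k) = k := by
        rw [pow_succ', Equiv.Perm.mul_apply, hspec']
        simp
      exact Nat.find_min (hbex k) (by rw [← hmdef, hmm]; omega) this
    have : h k = h (τ⁻¹ k) * u k := by
      rw [hhdef k, hhdef (τ⁻¹ k), hmm, hbk, hm'eq, Finset.prod_Icc_succ_top (by omega), h1]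
    rw [this, mul_comm (h (τ⁻¹ k)) (u k), mul_assoc, mul_inv_cancel, mul_one]

end Aux

private lemma conj_eq {A : Type*} [CommGroup A] {n : ℕ} (h f : Fin n → A)
    (π σ : Equiv.Perm (Fin n)) :
    ((⟨h, π⟩ : WreathProduct A n) * ⟨f, σ⟩ * (⟨h, π⟩ : WreathProduct A n)⁻¹) =
      (⟨fun k => h k * f (π⁻¹ k) * (h ((π * σ * π⁻¹)⁻¹ k))⁻¹, π * σ * π⁻¹⟩ :
        WreathProduct A n) := by
  ext <;> simp only [SemidirectProduct.mul_left, SemidirectProduct.mul_right,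
    SemidirectProduct.inv_left, SemidirectProduct.inv_right]
  all_goals simp [permMulAut, mul_assoc,
    Equiv.Perm.inv_def, Equiv.symm_symm, -SemidirectProduct.mk_eq_inl_mul_inr,
    Equiv.Perm.mul_def, Equiv.symm_trans_apply]

/-- Two elements `(f, σ)` and `(g, τ)` of the wreath product `A ≀ Σ_n`
are conjugate if and only if there is `π ∈ Equiv.Perm (Fin n)` with `π σ π⁻¹ = τ` such
that for every `i`, the product of `f` over the `σ`-orbit of `i` equals the product of
`g` over the `τ`-orbit of `π i`. -/
theorem wreath_isConj_iff
    {A : Type*} [CommGroup A] (n : ℕ) (f g : Fin n → A) (σ τ : Equiv.Perm (Fin n)) :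
    IsConj (⟨f, σ⟩ : WreathProduct A n) (⟨g, τ⟩ : WreathProduct A n) ↔
      ∃ π : Equiv.Perm (Fin n), π * σ * π⁻¹ = τ ∧
        ∀ i : Fin n,
          (∏ j ∈ Finset.univ.filter (fun j => σ.SameCycle i j), f j) =
            ∏ j ∈ Finset.univ.filter (fun j => τ.SameCycle (π i) j), g j := by
  classical
  rw [isConj_iff]
  constructor
  · rintro ⟨⟨h, π⟩, hc⟩
    rw [conj_eq] at hc
    have hr : π * σ * π⁻¹ = τ := congrArg SemidirectProduct.right hc
    have hl : (fun k => h k * f (π⁻¹ k) * (h ((π * σ * π⁻¹)⁻¹ k))⁻¹) = g :=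
      congrArg SemidirectProduct.left hc
    have hgk : ∀ k, g k = h k * f (π⁻¹ k) * (h (τ⁻¹ k))⁻¹ := by
      intro k
      rw [← hl]
      rw [hr]
    refine ⟨π, hr, fun i => ?_⟩
    have step1 : ∏ j ∈ Finset.univ.filter (fun j => σ.SameCycle i j), f j =
        ∏ j ∈ Finset.univ.filter (fun j => τ.SameCycle (π i) j), f (π⁻¹ j) := by
      rw [← hr]
      exact reindex_prod π σ f i
    have step2 : ∏ j ∈ Finset.univ.filter (fun j => τ.SameCycle (π i) j), g j =
        ∏ j ∈ Finset.univ.filter (fun j => τ.SameCycle (π i) j), f (π⁻¹ j) := by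
      calc ∏ j ∈ Finset.univ.filter (fun j => τ.SameCycle (π i) j), g j
          = ∏ j ∈ Finset.univ.filter (fun j => τ.SameCycle (π i) j),
              ((h j * (h (τ⁻¹ j))⁻¹) * f (π⁻¹ j)) := by
            refine Finset.prod_congr rfl fun j _ => ?_
            rw [hgk j]
            exact mul_right_comm _ _ _
        _ = (∏ j ∈ Finset.univ.filter (fun j => τ.SameCycle (π i) j),
              (h j * (h (τ⁻¹ j))⁻¹)) *
            ∏ j ∈ Finset.univ.filter (fun j => τ.SameCycle (π i) j), f (π⁻¹ j) :=
            Finset.prod_mul_distrib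
        _ = ∏ j ∈ Finset.univ.filter (fun j => τ.SameCycle (π i) j), f (π⁻¹ j) := by
            rw [telescope_prod, one_mul]
    rw [step1, step2]
  · rintro ⟨π, hπ, hprod⟩
    set u : Fin n → A := fun k => g k * (f (π⁻¹ k))⁻¹ with hu
    have H : ∀ x : Fin n, ∏ j ∈ Finset.univ.filter (fun j => τ.SameCycle x j), u j = 1 := by
      intro x
      have h1 := hprod (π⁻¹ x)
      rw [show π (π⁻¹ x) = x from π.apply_symm_apply x] at h1
      have h2 : ∏ j ∈ Finset.univ.filter (fun j => σ.SameCycle (π⁻¹ x) j), f j =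
          ∏ j ∈ Finset.univ.filter (fun j => τ.SameCycle x j), f (π⁻¹ j) := by
        have := reindex_prod π σ f (π⁻¹ x)
        rwa [hπ, show π (π⁻¹ x) = x from π.apply_symm_apply x] at this
      calc ∏ j ∈ Finset.univ.filter (fun j => τ.SameCycle x j), u j
          = (∏ j ∈ Finset.univ.filter (fun j => τ.SameCycle x j), g j) *
            (∏ j ∈ Finset.univ.filter (fun j => τ.SameCycle x j), f (π⁻¹ j))⁻¹ := by
            rw [← Finset.prod_inv_distrib, ← Finset.prod_mul_distrib]
        _ = 1 := by rw [← h2, ← h1, mul_inv_cancel]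
    obtain ⟨h, hcob⟩ := exists_coboundary τ u H
    refine ⟨⟨h, π⟩, ?_⟩
    rw [conj_eq, hπ]
    congr 1
    funext k
    have := hcob k
    rw [hu] at this
    simp only [] at this
    have hg : g k = h k * (h (τ⁻¹ k))⁻¹ * f (π⁻¹ k) := by
      rw [← this]
      group
    rw [hg]
    exact mul_right_comm _ _ _
end

section
/- Let p be a prime and let i be a natural number with 1 ≤ i ≤ p − 2. Then p divides the i-th elementary symmetric function of 1, 2, …, p − 1; that is, p divides ∑_{S} ∏_{j ∈ S} j, where S ranges over the i-element subsets of {1, 2, …, p − 1}. (Equivalently, the Stirling numbers of the first kind s(p, i) with 1 < i < p are divisible by p.) -/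
open Finset

/-- Let `p` be a prime and `1 ≤ i ≤ p − 2`.  Then `p` divides the
`i`-th elementary symmetric function of `1, 2, …, p − 1`, i.e. `p` divides
`∑_S ∏_{j ∈ S} j` where `S` ranges over the `i`-element subsets of `{1, …, p − 1}`. -/
theorem prime_dvd_esymm (p i : ℕ) (hp : p.Prime) (h1 : 1 ≤ i) (h2 : i ≤ p - 2) :
    p ∣ ∑ S ∈ Finset.powersetCard i (Finset.Icc 1 (p - 1)), ∏ j ∈ S, j := by
  haveI : Fact p.Prime := ⟨hp⟩
  have hp3 : 3 ≤ p := by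
    rcases hp.eq_two_or_odd with h | _
    · omega
    · have := hp.two_le
      rcases Nat.lt_or_ge p 3 with h | h
      · interval_cases p <;> omega
      · exact h
  -- reduce to a statement in `ZMod p`
  rw [← ZMod.natCast_eq_zero_iff]
  push_cast
  -- the nonzero elements of `ZMod p`
  set T : Finset (ZMod p) := Finset.univ \ {0} with hT
  have hinj : Set.InjOn (Nat.cast : ℕ → ZMod p) (Finset.Icc 1 (p - 1)) := by
    intro a ha b hb hab
    simp only [coe_Icc, Set.mem_Icc] at ha hb
    have := (ZMod.natCast_eq_natCast_iff' a b p).mp hab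
    rw [Nat.mod_eq_of_lt (by omega), Nat.mod_eq_of_lt (by omega)] at this
    exact this
  have himg : (Finset.Icc 1 (p - 1)).image (Nat.cast : ℕ → ZMod p) = T := by
    apply Finset.eq_of_subset_of_card_le
    · intro x hx
      simp only [Finset.mem_image, Finset.mem_Icc] at hx
      obtain ⟨a, ⟨ha1, ha2⟩, rfl⟩ := hx
      simp only [hT, Finset.mem_sdiff, Finset.mem_univ, Finset.mem_singleton, true_and]
      rw [ZMod.natCast_eq_zero_iff]
      intro hdvd
      have := Nat.le_of_dvd (by omega) hdvd
      omega
    · rw [Finset.card_sdiff_of_subset (by simp), Finset.card_singleton, Finset.card_univ,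
        ZMod.card, Finset.card_image_of_injOn hinj, Nat.card_Icc]
      omega
  have hval : ((Finset.Icc 1 (p - 1)).val.map (Nat.cast : ℕ → ZMod p)) = T.val := by
    rw [← Finset.image_val_of_injOn hinj, himg]
  rw [← Finset.esymm_map_val (Nat.cast : ℕ → ZMod p) _ i, hval]
  -- pick a generator of the unit group
  obtain ⟨g, hg⟩ := IsCyclic.exists_generator (α := (ZMod p)ˣ)
  have horder : orderOf g = p - 1 := by
    rw [orderOf_eq_card_of_forall_mem_zpowers hg, Nat.card_eq_fintype_card,
      ZMod.card_units_eq_totient, Nat.totient_prime hp]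
  have hgi : (g : ZMod p) ^ i ≠ 1 := by
    intro h
    have : g ^ i = 1 := Units.ext (by push_cast; exact h)
    have := orderOf_dvd_of_pow_eq_one this
    rw [horder] at this
    have := Nat.le_of_dvd h1 this
    omega
  -- T is invariant under multiplication by g
  have hTmap : T.val.map (fun x => (g : ZMod p) • x) = T.val := by
    have hginj : Function.Injective (fun x : ZMod p => (g : ZMod p) • x) := by
      intro a b hab
      simpa using mul_left_cancel₀ (g.ne_zero) hab
    have : T.image (fun x => (g : ZMod p) • x) = T := by
      apply Finset.eq_of_subset_of_card_le
      · intro x hx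
        simp only [Finset.mem_image] at hx
        obtain ⟨a, ha, rfl⟩ := hx
        simp only [hT, Finset.mem_sdiff, Finset.mem_univ, Finset.mem_singleton, true_and,
          smul_eq_mul] at ha ⊢
        exact mul_ne_zero g.ne_zero ha
      · rw [Finset.card_image_of_injective _ hginj]
    conv_rhs => rw [← this, Finset.image_val_of_injOn (hginj.injOn)]
  have key := Multiset.pow_smul_esymm ((g : ZMod p)) i T.val
  rw [hTmap, smul_eq_mul] at key
  -- (g^i - 1) * esymm = 0
  have : ((g : ZMod p) ^ i - 1) * T.val.esymm i = 0 := by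
    rw [sub_mul, one_mul, key, sub_self]
  rcases mul_eq_zero.mp this with h | h
  · exact absurd (by linear_combination h) hgi
  · exact h
end

section
/- Let m ≥ 1 and let d : Fin m → ℂ be a function with |d i| = 1 for every i, so that the diagonal matrix Matrix.diagonal d lies in Matrix.unitaryGroup (Fin m) ℂ. Then the centralizer of Matrix.diagonal d in Matrix.unitaryGroup (Fin m) ℂ is isomorphic as a group to the product, over the distinct values z in the range of d, of the unitary groups Matrix.unitaryGroup {i : Fin m // d i = z} ℂ. In other words, the centralizer of a diagonal unitary matrix is a product of unitary groups indexed by its eigenvalues, of sizes given by the eigenvalue multiplicities. -/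
/-- The centralizer in the unitary group of a diagonal unitary matrix
`Matrix.diagonal d` is isomorphic as a group to the product, over the distinct values
`z` in the range of `d`, of the unitary groups of the eigenspaces `{i | d i = z}`. -/
theorem centralizer_diagonal_unitary_iso_prod
    (m : ℕ) (hm : 1 ≤ m) (d : Fin m → ℂ) (h1 : ∀ i : Fin m, ‖d i‖ = 1)
    (hd : Matrix.diagonal d ∈ Matrix.unitaryGroup (Fin m) ℂ) :
    Nonempty ((Subgroup.centralizer
        {(⟨Matrix.diagonal d, hd⟩ : Matrix.unitaryGroup (Fin m) ℂ)}) ≃*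
      ∀ z : Set.range d, Matrix.unitaryGroup {i : Fin m // d i = (z : ℂ)} ℂ) := by
  classical
  set U := Matrix.unitaryGroup (Fin m) ℂ with hU
  set D : U := ⟨Matrix.diagonal d, hd⟩ with hD
  -- entries vanish off the blocks
  have hvan : ∀ u : Matrix (Fin m) (Fin m) ℂ, Matrix.diagonal d * u = u * Matrix.diagonal d →
      ∀ i j : Fin m, d i ≠ d j → u i j = 0 := by
    intro u hu i j hij
    have h0 := congrFun (congrFun hu i) j
    rw [Matrix.diagonal_mul, Matrix.mul_diagonal] at h0
    have h2 : (d i - d j) * u i j = 0 := by ring_nf; linear_combination h0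
    rcases mul_eq_zero.mp h2 with h | h
    · exact absurd (sub_eq_zero.mp h) hij
    · exact h
  -- sums over a fiber
  have hsum : ∀ (z : ℂ) (f : Fin m → ℂ), (∀ k, d k ≠ z → f k = 0) →
      ∑ k : {k : Fin m // d k = z}, f k.1 = ∑ k, f k := by
    intro z f hf
    rw [← Finset.sum_subtype (Finset.univ.filter fun k => d k = z) (by simp) f]
    exact Finset.sum_filter_of_ne fun x _ hx => by_contra fun h => hx (hf x h)
  -- congruence for blocks
  have hB : ∀ (B : ∀ z : Set.range d, Matrix.unitaryGroup {i : Fin m // d i = (z : ℂ)} ℂ)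
      (z w : Set.range d) (hzw : z = w) (i : {k : Fin m // d k = (z : ℂ)})
      (i' : {k : Fin m // d k = (w : ℂ)}) (hi : (i : Fin m) = (i' : Fin m))
      (j : {k : Fin m // d k = (z : ℂ)}) (j' : {k : Fin m // d k = (w : ℂ)})
      (hj : (j : Fin m) = (j' : Fin m)),
      (B z).1 i j = (B w).1 i' j' := by
    rintro B z w rfl i i' hi j j' hj
    obtain rfl : i = i' := Subtype.ext hi
    obtain rfl : j = j' := Subtype.ext hj
    rfl
  -- commuting property of centralizer elements
  have hcomm : ∀ u : Subgroup.centralizer ({D} : Set U),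
      Matrix.diagonal d * (u : Matrix (Fin m) (Fin m) ℂ) =
        (u : Matrix (Fin m) (Fin m) ℂ) * Matrix.diagonal d := by
    intro u
    have h := congrArg Subtype.val ((Subgroup.mem_centralizer_singleton_iff).mp u.2)
    exact h.symm
  -- the blocks of a centralizer element are unitary
  have hblk : ∀ (u : Subgroup.centralizer ({D} : Set U)) (z : Set.range d),
      (Matrix.of fun (i j : {k : Fin m // d k = (z : ℂ)}) =>
        (u : Matrix (Fin m) (Fin m) ℂ) i.1 j.1) ∈
        Matrix.unitaryGroup {k : Fin m // d k = (z : ℂ)} ℂ := by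
    intro u z
    have hu : (u : Matrix (Fin m) (Fin m) ℂ) * star (u : Matrix (Fin m) (Fin m) ℂ) = 1 :=
      Matrix.mem_unitaryGroup_iff.mp (u : U).2
    rw [Matrix.mem_unitaryGroup_iff]
    ext i j
    simp only [Matrix.mul_apply, Matrix.star_apply, Matrix.of_apply]
    rw [hsum (z : ℂ) (fun k => (u : Matrix (Fin m) (Fin m) ℂ) i.1 k *
        star ((u : Matrix (Fin m) (Fin m) ℂ) j.1 k)) ?_]
    · have e := congrFun (congrFun hu i.1) j.1
      rw [Matrix.mul_apply] at e
      simp only [Matrix.star_apply] at e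
      rw [e, Matrix.one_apply, Matrix.one_apply]
      by_cases hij : i = j
      · simp [hij]
      · rw [if_neg hij, if_neg (fun h => hij (Subtype.ext h))]
    · intro k hk
      have : (u : Matrix (Fin m) (Fin m) ℂ) i.1 k = 0 :=
        hvan _ (hcomm u) i.1 k (by rw [i.2]; exact fun h => hk h.symm)
      simp [this]
  let F : Subgroup.centralizer ({D} : Set U) →
      ∀ z : Set.range d, Matrix.unitaryGroup {i : Fin m // d i = (z : ℂ)} ℂ :=
    fun u z => ⟨Matrix.of fun i j => (u : Matrix (Fin m) (Fin m) ℂ) i.1 j.1, hblk u z⟩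
  refine ⟨MulEquiv.ofBijective (MonoidHom.mk' F ?_) ⟨?_, ?_⟩⟩
  · -- multiplicative
    intro u v
    funext z
    apply Subtype.ext
    ext i j
    show ((u : Matrix (Fin m) (Fin m) ℂ) * (v : Matrix (Fin m) (Fin m) ℂ)) i.1 j.1 = _
    rw [Matrix.mul_apply]
    rw [← hsum (z : ℂ) (fun k => (u : Matrix (Fin m) (Fin m) ℂ) i.1 k *
        (v : Matrix (Fin m) (Fin m) ℂ) k j.1) ?_]
    · simp [F, Matrix.mul_apply]
    · intro k hk
      have : (u : Matrix (Fin m) (Fin m) ℂ) i.1 k = 0 :=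
        hvan _ (hcomm u) i.1 k (by rw [i.2]; exact fun h => hk h.symm)
      simp [this]
  · -- injective
    intro u v h
    apply Subtype.ext
    apply Subtype.ext
    ext i j
    by_cases hij : d i = d j
    · have h0 := congrFun h ⟨d i, ⟨i, rfl⟩⟩
      have h1' := congrArg Subtype.val h0
      exact congrFun (congrFun h1' ⟨i, rfl⟩) ⟨j, hij.symm⟩
    · rw [hvan _ (hcomm u) i j hij, hvan _ (hcomm v) i j hij]
  · -- surjective
    intro B
    set M : Matrix (Fin m) (Fin m) ℂ :=
      Matrix.of (fun i j => if h : d j = d i then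
        (B ⟨d i, ⟨i, rfl⟩⟩).1 ⟨i, rfl⟩ ⟨j, h⟩ else 0) with hMdef
    have hMvan : ∀ i j : Fin m, d j ≠ d i → M i j = 0 := by
      intro i j hij
      rw [hMdef, Matrix.of_apply, dif_neg hij]
    have hMapp : ∀ (i j : Fin m) (h : d j = d i),
        M i j = (B ⟨d i, ⟨i, rfl⟩⟩).1 ⟨i, rfl⟩ ⟨j, h⟩ := by
      intro i j h
      rw [hMdef, Matrix.of_apply, dif_pos h]
    have hM : M ∈ U := by
      rw [hU, Matrix.mem_unitaryGroup_iff]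
      ext i j
      rw [Matrix.mul_apply, Matrix.one_apply]
      simp only [Matrix.star_apply]
      by_cases hij : d i = d j
      · rw [← hsum (d i) (fun k => M i k * star (M j k)) ?_]
        · have hz : (⟨d j, ⟨j, rfl⟩⟩ : Set.range d) = ⟨d i, ⟨i, rfl⟩⟩ := Subtype.ext hij.symm
          have key : ∀ k : {k : Fin m // d k = d i},
              M i k.1 * star (M j k.1) =
              (B ⟨d i, ⟨i, rfl⟩⟩).1 ⟨i, rfl⟩ k *
                star ((B ⟨d i, ⟨i, rfl⟩⟩).1 ⟨j, hij.symm⟩ k) := by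
            intro k
            rw [hMapp i k.1 k.2, hMapp j k.1 (k.2.trans hij)]
            rw [hB B ⟨d j, ⟨j, rfl⟩⟩ ⟨d i, ⟨i, rfl⟩⟩ hz ⟨j, rfl⟩ ⟨j, hij.symm⟩ rfl
              ⟨k.1, k.2.trans hij⟩ k rfl]
          rw [Finset.sum_congr rfl (fun k _ => key k)]
          have hBu : (B ⟨d i, ⟨i, rfl⟩⟩).1 * star (B ⟨d i, ⟨i, rfl⟩⟩).1 = 1 :=
            Matrix.mem_unitaryGroup_iff.mp (B ⟨d i, ⟨i, rfl⟩⟩).2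
          have e := congrFun (congrFun hBu ⟨i, rfl⟩) ⟨j, hij.symm⟩
          rw [Matrix.mul_apply] at e
          simp only [Matrix.star_apply] at e
          rw [e, Matrix.one_apply]
          by_cases h' : i = j
          · subst h'; simp
          · rw [if_neg (fun h => h' (congrArg Subtype.val h)), if_neg h']
        · intro k hk
          show M i k * star (M j k) = 0
          rw [hMvan i k hk, zero_mul]
      · rw [if_neg (fun h => hij (congrArg d h))]
        apply Finset.sum_eq_zero
        intro k _
        show M i k * star (M j k) = 0
        by_cases hki : d k = d i
        · rw [hMvan j k (fun h => hij (hki.symm.trans h)), star_zero, mul_zero]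
        · rw [hMvan i k hki, zero_mul]
    have hMc : (⟨M, hM⟩ : U) ∈ Subgroup.centralizer ({D} : Set U) := by
      rw [Subgroup.mem_centralizer_singleton_iff]
      apply Subtype.ext
      show M * Matrix.diagonal d = Matrix.diagonal d * M
      ext i j
      rw [Matrix.mul_diagonal, Matrix.diagonal_mul]
      by_cases hij : d i = d j
      · rw [hij, mul_comm]
      · rw [hMvan i j (fun h => hij h.symm), zero_mul, mul_zero]
    refine ⟨⟨⟨M, hM⟩, hMc⟩, ?_⟩
    funext z
    apply Subtype.ext
    ext i j
    show M i.1 j.1 = (B z).1 i j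
    rw [hMapp i.1 j.1 (j.2.trans i.2.symm)]
    exact hB B ⟨d i.1, ⟨i.1, rfl⟩⟩ z (Subtype.ext i.2) ⟨i.1, rfl⟩ i rfl
      ⟨j.1, j.2.trans i.2.symm⟩ j rfl
end
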